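/- arXiv:1912.08599 — 3 statements merged into one kernel-verified Lean document; each statement's English description precedes it below -/
import Mathlib

section
/- Let t0 < T be real numbers, θ ∈ (0,1), 0 < μ < 1, γ > 0, b > 0, x0 ∈ ℝ, and let f : [t0,T] × ℝ → ℝ be continuous and satisfy the Lipschitz condition |f(t,y1) − f(t,y2)| ≤ A|y1 − y2| for all t ∈ [t0,T] and y1, y2 ∈ ℝ, where A > 0. If C1(T,A) < 1, then there exists a unique continuous function x : [t0,T] → ℝ such that x(t) = x0 + (I^{θ,μ,γ}(f(·, x(·))))(t) for all t ∈ [t0,T]; in particular x(t0) = x0. -/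
open Real MeasureTheory Set

/-- Generalized binomial coefficient `C(γ, i) = γ(γ-1)⋯(γ-i+1)/i!`. -/
noncomputable def genBinom (γ : ℝ) (i : ℕ) : ℝ :=
  (∏ j ∈ Finset.range i, (γ - j)) / (Nat.factorial i : ℝ)

/-- Rising factorial `(ρ)_k = ρ(ρ+1)⋯(ρ+k-1)`. -/
noncomputable def risingFac (ρ : ℝ) (k : ℕ) : ℝ :=
  ∏ j ∈ Finset.range k, (ρ + j)

/-- Generalized Mittag-Leffler function `E_{θ,β}^ρ(λ, z)`
(terms with `Γ` at a pole vanish since `Real.Gamma` is `0` there). -/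
noncomputable def mittagLeffler (θ β ρ lam z : ℝ) : ℝ :=
  ∑' k : ℕ, lam ^ k * z ^ ((k : ℝ) * θ + β - 1) * risingFac ρ k /
    (Real.Gamma ((k : ℝ) * θ + β) * (Nat.factorial k : ℝ))

/-- Generalized AB fractional integral `(I^{θ,μ,γ} η)(t)` starting at `t0`,
with normalization constant `b = B(θ) > 0`. -/
noncomputable def ABIntegral (t0 b θ μ γ : ℝ) (η : ℝ → ℝ) (t : ℝ) : ℝ :=
  ∑' i : ℕ, genBinom γ i * θ ^ i /
      (b * (1 - θ) ^ ((i : ℝ) - 1) * Real.Gamma ((i : ℝ) * θ + 1 - μ)) *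
    ∫ s in t0..t, (t - s) ^ ((i : ℝ) * θ - μ) * η s

/-- Generalized ABC fractional derivative `(D^{θ,μ,γ} f)(t)` starting at `t0`,
with `λ = -θ/(1-θ)` and normalization constant `b = B(θ) > 0`. -/
noncomputable def ABCDeriv (t0 b θ μ γ : ℝ) (f : ℝ → ℝ) (t : ℝ) : ℝ :=
  (b / (1 - θ)) * ∫ s in t0..t, mittagLeffler θ μ γ (-θ / (1 - θ)) (t - s) * deriv f s

/-- Generalized ABR fractional derivative `(R^{θ,μ,γ} f)(t)` starting at `t0`. -/
noncomputable def ABRDeriv (t0 b θ μ γ : ℝ) (f : ℝ → ℝ) (t : ℝ) : ℝ :=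
  (b / (1 - θ)) *
    deriv (fun u => ∫ s in t0..u, mittagLeffler θ μ γ (-θ / (1 - θ)) (u - s) * f s) t

/-- The contraction constant `C1(T, A)` (case `μ ≠ 1`). -/
noncomputable def C1const (t0 T b θ μ γ A : ℝ) : ℝ :=
  (A / b) * ∑' i : ℕ, |genBinom γ i| * θ ^ i * (T - t0) ^ ((i : ℝ) * θ + 1 - μ) /
    ((1 - θ) ^ ((i : ℝ) - 1) * Real.Gamma ((i : ℝ) * θ + 2 - μ))

/-- The contraction constant `C2(T, A)` (case `μ = 1`). -/
noncomputable def C2const (t0 T b θ γ A : ℝ) : ℝ :=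
  (A / b) * ((1 - θ) +
    ∑' i : ℕ, |genBinom γ (i + 1)| * θ ^ (i + 1) * (T - t0) ^ (((i : ℝ) + 1) * θ) /
      ((1 - θ) ^ (i : ℕ) * Real.Gamma (((i : ℝ) + 1) * θ + 1)))

/-- The operator `Υ` in the case `μ = 1`, whose `i = 0` term reduces to `((1-θ)/b) f(t, x(t))`. -/
noncomputable def UpsilonMuOne (t0 b θ γ x0 : ℝ) (f : ℝ → ℝ → ℝ) (x : ℝ → ℝ) (t : ℝ) : ℝ :=
  x0 + ((1 - θ) / b) * f t (x t) +
    ∑' i : ℕ, genBinom γ (i + 1) * θ ^ (i + 1) /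
        (b * (1 - θ) ^ (i : ℕ) * Real.Gamma (((i : ℝ) + 1) * θ)) *
      ∫ s in t0..t, (t - s) ^ (((i : ℝ) + 1) * θ - 1) * f s (x s)

open Filter intervalIntegral

noncomputable def sTerm (t0 T θ μ γ : ℝ) (i : ℕ) : ℝ :=
  |genBinom γ i| * θ ^ i * (T - t0) ^ ((i : ℝ) * θ + 1 - μ) /
    ((1 - θ) ^ ((i : ℝ) - 1) * Real.Gamma ((i : ℝ) * θ + 2 - μ))

lemma gamma_lower {θ x : ℝ} (hθ0 : 0 < θ) (hθ1 : θ < 1) (hx0 : 0 < x) (hx1 : 1 < x + θ) :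
    (x + θ - 1) ^ θ * Real.Gamma x ≤ Real.Gamma (x + θ) := by
  have h1 : 0 < x + θ - 1 := by linarith
  have hxθ : 0 < x + θ := by linarith
  have hconv := Real.convexOn_log_Gamma.2 (Set.mem_Ioi.2 h1) (Set.mem_Ioi.2 hxθ)
      (le_of_lt hθ0) (by linarith : (0:ℝ) ≤ 1 - θ) (by ring)
  have harg : θ • (x + θ - 1) + (1 - θ) • (x + θ) = x := by
    simp only [smul_eq_mul]; ring
  rw [harg] at hconv
  have hGpos : 0 < Real.Gamma x := Real.Gamma_pos_of_pos hx0
  have hGpos1 : 0 < Real.Gamma (x + θ - 1) := Real.Gamma_pos_of_pos h1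
  have hGposθ : 0 < Real.Gamma (x + θ) := Real.Gamma_pos_of_pos hxθ
  have hG1 : Real.Gamma (x + θ) = (x + θ - 1) * Real.Gamma (x + θ - 1) := by
    have h2 := Real.Gamma_add_one (ne_of_gt h1)
    rw [show x + θ - 1 + 1 = x + θ by ring] at h2
    exact h2
  have hlog : Real.log (Real.Gamma (x + θ - 1))
      = Real.log (Real.Gamma (x + θ)) - Real.log (x + θ - 1) := by
    rw [hG1, Real.log_mul (ne_of_gt h1) (ne_of_gt hGpos1)]; ring
  simp only [Function.comp, smul_eq_mul] at hconv
  rw [hlog] at hconv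
  have key : Real.log ((x + θ - 1) ^ θ * Real.Gamma x) ≤ Real.log (Real.Gamma (x + θ)) := by
    rw [Real.log_mul (by positivity) (ne_of_gt hGpos), Real.log_rpow h1]
    nlinarith [hconv]
  calc (x + θ - 1) ^ θ * Real.Gamma x
      = Real.exp (Real.log ((x + θ - 1) ^ θ * Real.Gamma x)) := by
        rw [Real.exp_log (by positivity)]
    _ ≤ Real.exp (Real.log (Real.Gamma (x + θ))) := Real.exp_le_exp.2 key
    _ = Real.Gamma (x + θ) := Real.exp_log hGposθ

lemma sTerm_nonneg (t0 T θ μ γ : ℝ) (htT : t0 ≤ T) (hθ0 : 0 < θ) (hθ1 : θ < 1)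
    (hμ1 : μ < 2) (i : ℕ) : 0 ≤ sTerm t0 T θ μ γ i := by
  have h1θ : (0:ℝ) < 1 - θ := by linarith
  have hiθ : (0:ℝ) ≤ (i:ℝ) * θ := by positivity
  have hΓ : 0 < Real.Gamma ((i:ℝ) * θ + 2 - μ) := Real.Gamma_pos_of_pos (by linarith)
  have hT : (0:ℝ) ≤ T - t0 := by linarith
  unfold sTerm
  apply div_nonneg
  · positivity
  · positivity

lemma genBinom_succ_abs_le (γ : ℝ) (hγ : 0 < γ) (i : ℕ) :
    |genBinom γ (i + 1)| ≤ (γ + 1) * |genBinom γ i| := by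
  have hfac : ((Nat.factorial i : ℝ)) ≠ 0 := Nat.cast_ne_zero.2 (Nat.factorial_ne_zero i)
  have hi1 : ((i:ℝ) + 1) ≠ 0 := by positivity
  have hrec : genBinom γ (i + 1) = genBinom γ i * ((γ - i) / ((i:ℝ) + 1)) := by
    unfold genBinom
    rw [Finset.prod_range_succ, Nat.factorial_succ]
    push_cast
    rw [div_mul_div_comm, mul_comm ((Nat.factorial i : ℝ)) ((i:ℝ) + 1)]
  rw [hrec, abs_mul]
  have hin : (0:ℝ) ≤ (i:ℝ) := Nat.cast_nonneg i
  have h2 : |(γ - i) / ((i:ℝ) + 1)| ≤ γ + 1 := by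
    rw [abs_div, abs_of_pos (by positivity : (0:ℝ) < (i:ℝ) + 1),
      div_le_iff₀ (by positivity : (0:ℝ) < (i:ℝ) + 1)]
    have h3 : |γ - (i:ℝ)| ≤ γ + i := abs_le.2 ⟨by linarith, by linarith⟩
    nlinarith
  calc |genBinom γ i| * |(γ - i) / ((i:ℝ) + 1)| ≤ |genBinom γ i| * (γ + 1) :=
        mul_le_mul_of_nonneg_left h2 (abs_nonneg _)
    _ = (γ + 1) * |genBinom γ i| := mul_comm _ _

lemma sTerm_succ_le (t0 T θ μ γ : ℝ) (htT : t0 < T) (hθ0 : 0 < θ) (hθ1 : θ < 1)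
    (hμ0 : 0 < μ) (hμ1 : μ < 1) (hγ : 0 < γ) (i : ℕ) (hi : 1 ≤ i) :
    sTerm t0 T θ μ γ (i + 1) ≤
      ((γ + 1) * θ * (T - t0) ^ θ / ((1 - θ) * ((i : ℝ) * θ) ^ θ)) * sTerm t0 T θ μ γ i := by
  have hT0 : (0:ℝ) < T - t0 := by linarith
  have h1θ : (0:ℝ) < 1 - θ := by linarith
  have hi1 : (1:ℝ) ≤ (i:ℝ) := by exact_mod_cast hi
  have hiθ : (0:ℝ) < (i:ℝ) * θ := by nlinarith
  have hx0 : (0:ℝ) < (i:ℝ) * θ + 2 - μ := by linarith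
  have hΓi : 0 < Real.Gamma ((i:ℝ) * θ + 2 - μ) := Real.Gamma_pos_of_pos hx0
  -- numerator bound
  have hsplit : (T - t0) ^ (((i:ℝ) + 1) * θ + 1 - μ)
      = (T - t0) ^ ((i:ℝ) * θ + 1 - μ) * (T - t0) ^ θ := by
    rw [← Real.rpow_add hT0]; congr 1; ring
  have hnum : |genBinom γ (i+1)| * θ ^ (i+1) * (T - t0) ^ (((i:ℝ) + 1) * θ + 1 - μ)
      ≤ (γ + 1) * θ * (T - t0) ^ θ *
        (|genBinom γ i| * θ ^ i * (T - t0) ^ ((i:ℝ) * θ + 1 - μ)) := by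
    rw [hsplit, pow_succ]
    have h1 := genBinom_succ_abs_le γ hγ i
    have h2 : (0:ℝ) ≤ θ ^ i * θ := by positivity
    have h3 : (0:ℝ) ≤ (T - t0) ^ ((i:ℝ) * θ + 1 - μ) * (T - t0) ^ θ := by positivity
    calc |genBinom γ (i+1)| * (θ ^ i * θ) * ((T - t0) ^ ((i:ℝ) * θ + 1 - μ) * (T - t0) ^ θ)
        ≤ ((γ + 1) * |genBinom γ i|) * (θ ^ i * θ) *
            ((T - t0) ^ ((i:ℝ) * θ + 1 - μ) * (T - t0) ^ θ) := by
          apply mul_le_mul_of_nonneg_right (mul_le_mul_of_nonneg_right h1 h2) h3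
      _ = (γ + 1) * θ * (T - t0) ^ θ *
            (|genBinom γ i| * θ ^ i * (T - t0) ^ ((i:ℝ) * θ + 1 - μ)) := by ring
  -- denominator bound
  have hpow1θ : (1 - θ) ^ (((i:ℝ) + 1) - 1) = (1 - θ) ^ ((i:ℝ) - 1) * (1 - θ) := by
    rw [show ((i:ℝ) + 1) - 1 = ((i:ℝ) - 1) + 1 by ring, Real.rpow_add h1θ, Real.rpow_one]
  have hΓsucc : ((i:ℝ) * θ) ^ θ * Real.Gamma ((i:ℝ) * θ + 2 - μ)
      ≤ Real.Gamma (((i:ℝ) + 1) * θ + 2 - μ) := by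
    have h := gamma_lower hθ0 hθ1 hx0 (by linarith : 1 < ((i:ℝ) * θ + 2 - μ) + θ)
    rw [show ((i:ℝ) * θ + 2 - μ) + θ = ((i:ℝ) + 1) * θ + 2 - μ by ring] at h
    refine le_trans ?_ h
    apply mul_le_mul_of_nonneg_right _ (le_of_lt hΓi)
    exact Real.rpow_le_rpow (le_of_lt hiθ) (by linarith) (le_of_lt hθ0)
  have hden : ((1 - θ) * ((i:ℝ) * θ) ^ θ) * ((1 - θ) ^ ((i:ℝ) - 1) * Real.Gamma ((i:ℝ) * θ + 2 - μ))
      ≤ (1 - θ) ^ (((i:ℝ) + 1) - 1) * Real.Gamma (((i:ℝ) + 1) * θ + 2 - μ) := by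
    rw [hpow1θ]
    calc ((1 - θ) * ((i:ℝ) * θ) ^ θ) * ((1 - θ) ^ ((i:ℝ) - 1) * Real.Gamma ((i:ℝ) * θ + 2 - μ))
        = ((1 - θ) ^ ((i:ℝ) - 1) * (1 - θ)) * (((i:ℝ) * θ) ^ θ * Real.Gamma ((i:ℝ) * θ + 2 - μ)) := by
          ring
      _ ≤ ((1 - θ) ^ ((i:ℝ) - 1) * (1 - θ)) * Real.Gamma (((i:ℝ) + 1) * θ + 2 - μ) := by
          apply mul_le_mul_of_nonneg_left hΓsucc (by positivity)
  have hD2pos : 0 < ((1 - θ) * ((i:ℝ) * θ) ^ θ) *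
      ((1 - θ) ^ ((i:ℝ) - 1) * Real.Gamma ((i:ℝ) * θ + 2 - μ)) := by
    apply mul_pos (by positivity)
    exact mul_pos (Real.rpow_pos_of_pos h1θ _) hΓi
  unfold sTerm
  push_cast
  rw [div_mul_div_comm]
  exact div_le_div₀ (by positivity) hnum hD2pos hden

lemma summable_sTerm (t0 T θ μ γ : ℝ) (htT : t0 < T) (hθ0 : 0 < θ) (hθ1 : θ < 1)
    (hμ0 : 0 < μ) (hμ1 : μ < 1) (hγ : 0 < γ) : Summable (sTerm t0 T θ μ γ) := by
  have hT0 : (0:ℝ) < T - t0 := by linarith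
  have h1θ : (0:ℝ) < 1 - θ := by linarith
  set c : ℝ := (γ + 1) * θ * (T - t0) ^ θ / (1 - θ) with hc
  have hcpos : 0 < c := by positivity
  have htends : Tendsto (fun i : ℕ => ((i : ℝ) * θ) ^ θ) atTop atTop :=
    (tendsto_rpow_atTop hθ0).comp (tendsto_natCast_atTop_atTop.atTop_mul_const hθ0)
  apply summable_of_ratio_norm_eventually_le (by norm_num : (1:ℝ)/2 < 1)
  filter_upwards [htends.eventually_ge_atTop (2 * c), eventually_ge_atTop 1] with i hi2c hi1
  have hnn := sTerm_nonneg t0 T θ μ γ (le_of_lt htT) hθ0 hθ1 (by linarith) i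
  have hnn1 := sTerm_nonneg t0 T θ μ γ (le_of_lt htT) hθ0 hθ1 (by linarith) (i + 1)
  rw [Real.norm_eq_abs, Real.norm_eq_abs, abs_of_nonneg hnn, abs_of_nonneg hnn1]
  have hiθ : (0:ℝ) < ((i:ℝ) * θ) ^ θ := by
    apply Real.rpow_pos_of_pos
    have : (1:ℝ) ≤ (i:ℝ) := by exact_mod_cast hi1
    nlinarith
  have hstep := sTerm_succ_le t0 T θ μ γ htT hθ0 hθ1 hμ0 hμ1 hγ i hi1
  have hratio : (γ + 1) * θ * (T - t0) ^ θ / ((1 - θ) * ((i:ℝ) * θ) ^ θ) ≤ 1 / 2 := by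
    rw [div_le_iff₀ (by positivity)]
    have : c ≤ ((i:ℝ) * θ) ^ θ / 2 := by linarith
    rw [hc, div_le_iff₀ h1θ] at this
    nlinarith
  calc sTerm t0 T θ μ γ (i + 1)
      ≤ ((γ + 1) * θ * (T - t0) ^ θ / ((1 - θ) * ((i:ℝ) * θ) ^ θ)) * sTerm t0 T θ μ γ i := hstep
    _ ≤ (1/2) * sTerm t0 T θ μ γ i := mul_le_mul_of_nonneg_right hratio hnn
    _ = 1/2 * sTerm t0 T θ μ γ i := by ring

-- kernel integrability on any interval
lemma kernel_intble (a b c e : ℝ) (he : -1 < e) :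
    IntervalIntegrable (fun s => (c - s) ^ e) volume a b := by
  have h := (intervalIntegrable_rpow' he (a := c - a) (b := c - b)).comp_sub_left c
  simpa using h

lemma kernel_mul_intble {η : ℝ → ℝ} (a b c e : ℝ) (he : -1 < e) (hη : Continuous η) :
    IntervalIntegrable (fun s => (c - s) ^ e * η s) volume a b :=
  (kernel_intble a b c e he).mul_continuousOn hη.continuousOn

-- exact integral of the kernel
lemma kernel_integral (a b c e : ℝ) (hab : a ≤ b) (hbc : b ≤ c) (he : -1 < e) :
    ∫ s in a..b, (c - s) ^ e = ((c - a) ^ (e + 1) - (c - b) ^ (e + 1)) / (e + 1) := by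
  rw [intervalIntegral.integral_comp_sub_left (fun u => u ^ e) c]
  rw [integral_rpow (Or.inl he)]

lemma kernel_integral' (a c e : ℝ) (hac : a ≤ c) (he : -1 < e) :
    ∫ s in a..c, (c - s) ^ e = (c - a) ^ (e + 1) / (e + 1) := by
  rw [kernel_integral a c c e hac le_rfl he, sub_self,
    Real.zero_rpow (by linarith : e + 1 ≠ 0)]
  ring

-- basic bound
lemma kernel_mul_bound {η : ℝ → ℝ} (a c e M : ℝ) (hac : a ≤ c) (he : -1 < e)
    (hη : Continuous η) (hM : ∀ s, |η s| ≤ M) :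
    |∫ s in a..c, (c - s) ^ e * η s| ≤ M * (c - a) ^ (e + 1) / (e + 1) := by
  have hM0 : 0 ≤ M := le_trans (abs_nonneg _) (hM a)
  have hb : IntervalIntegrable (fun s => (c - s) ^ e * M) volume a c :=
    (kernel_intble a c c e he).mul_const M
  have h1 : ∀ᵐ t ∂(volume.restrict (Set.uIoc a c)), ‖(c - t) ^ e * η t‖ ≤ (c - t) ^ e * M := by
    apply ae_restrict_of_forall_mem measurableSet_uIoc
    intro t ht
    rw [uIoc_of_le hac] at ht
    have h2 : (0:ℝ) ≤ c - t := by linarith [ht.2]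
    rw [norm_mul, Real.norm_eq_abs, Real.norm_eq_abs, abs_of_nonneg (Real.rpow_nonneg h2 e)]
    exact mul_le_mul_of_nonneg_left ((Real.norm_eq_abs _).le.trans (hM t)) (Real.rpow_nonneg h2 e)
  calc |∫ s in a..c, (c - s) ^ e * η s| = ‖∫ s in a..c, (c - s) ^ e * η s‖ :=
        (Real.norm_eq_abs _).symm
    _ ≤ |∫ s in a..c, (c - s) ^ e * M| := intervalIntegral.norm_integral_le_abs_of_norm_le h1 hb
    _ = |(∫ s in a..c, (c - s) ^ e) * M| := by rw [intervalIntegral.integral_mul_const]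
    _ = |(c - a) ^ (e + 1) / (e + 1) * M| := by rw [kernel_integral' a c e hac he]
    _ = M * (c - a) ^ (e + 1) / (e + 1) := by
        rw [abs_of_nonneg]; · ring
        · have : (0:ℝ) ≤ c - a := by linarith
          have h3 : (0:ℝ) < e + 1 := by linarith
          positivity

lemma kernel_modulus {η : ℝ → ℝ} (t0 t1 t2 e M : ℝ) (h01 : t0 ≤ t1) (h12 : t1 ≤ t2)
    (he : -1 < e) (hη : Continuous η) (hM : ∀ s, |η s| ≤ M) :
    |(∫ s in t0..t2, (t2 - s) ^ e * η s) - ∫ s in t0..t1, (t1 - s) ^ e * η s| ≤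
      M * (|(t2 - t0) ^ (e + 1) - (t2 - t1) ^ (e + 1) - (t1 - t0) ^ (e + 1)| +
        (t2 - t1) ^ (e + 1)) / (e + 1) := by
  have hp : 0 < e + 1 := by linarith
  have hM0 : 0 ≤ M := le_trans (abs_nonneg _) (hM 0)
  have i1 : IntervalIntegrable (fun s => (t2 - s) ^ e * η s) volume t0 t1 :=
    kernel_mul_intble _ _ _ _ he hη
  have i2 : IntervalIntegrable (fun s => (t2 - s) ^ e * η s) volume t1 t2 :=
    kernel_mul_intble _ _ _ _ he hη
  have i3 : IntervalIntegrable (fun s => (t1 - s) ^ e * η s) volume t0 t1 :=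
    kernel_mul_intble _ _ _ _ he hη
  have k1 : IntervalIntegrable (fun s => (t2 - s) ^ e) volume t0 t1 := kernel_intble _ _ _ _ he
  have k2 : IntervalIntegrable (fun s => (t1 - s) ^ e) volume t0 t1 := kernel_intble _ _ _ _ he
  set d : ℝ → ℝ := fun s => (t2 - s) ^ e - (t1 - s) ^ e with hd
  have hdint : IntervalIntegrable d volume t0 t1 := k1.sub k2
  set X : ℝ := (t2 - t0) ^ (e + 1) - (t2 - t1) ^ (e + 1) - (t1 - t0) ^ (e + 1) with hXdef
  have hsplit : (∫ s in t0..t2, (t2 - s) ^ e * η s)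
      = (∫ s in t0..t1, (t2 - s) ^ e * η s) + ∫ s in t1..t2, (t2 - s) ^ e * η s :=
    (intervalIntegral.integral_add_adjacent_intervals i1 i2).symm
  have hdiff : (∫ s in t0..t2, (t2 - s) ^ e * η s) - ∫ s in t0..t1, (t1 - s) ^ e * η s
      = (∫ s in t0..t1, d s * η s) + ∫ s in t1..t2, (t2 - s) ^ e * η s := by
    rw [hsplit]
    have h4 : (∫ s in t0..t1, (t2 - s) ^ e * η s) - ∫ s in t0..t1, (t1 - s) ^ e * η s
        = ∫ s in t0..t1, d s * η s := by
      rw [← intervalIntegral.integral_sub i1 i3]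
      apply intervalIntegral.integral_congr
      intro s _
      simp only [hd]; ring
    linarith [h4]
  have hX : (∫ s in t0..t1, d s) = X / (e + 1) := by
    have h5 : (∫ s in t0..t1, d s) = (∫ s in t0..t1, (t2 - s) ^ e) - ∫ s in t0..t1, (t1 - s) ^ e :=
      intervalIntegral.integral_sub k1 k2
    rw [h5, kernel_integral t0 t1 t2 e h01 h12 he, kernel_integral' t0 t1 e h01 he, hXdef]
    ring
  have habs_le : (∫ s in t0..t1, |d s|) ≤ |X| / (e + 1) := by
    rcases le_or_gt 0 e with he0 | he0
    · have heq : EqOn (fun s => |d s|) d (uIcc t0 t1) := by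
        intro s hs
        rw [uIcc_of_le h01] at hs
        apply abs_of_nonneg
        have h1 : (0:ℝ) ≤ t1 - s := by linarith [hs.2]
        have h2 : t1 - s ≤ t2 - s := by linarith
        simp only [hd]
        have := Real.rpow_le_rpow h1 h2 he0
        linarith
      rw [intervalIntegral.integral_congr heq, hX]
      gcongr
      exact le_abs_self _
    · have h1 : ∀ᵐ (s : ℝ), s ≠ t1 := by
        rw [ae_iff]
        convert Real.volume_singleton (a := t1) using 2
        ext s; simp
      have hae : ∀ᵐ s ∂(volume : Measure ℝ), s ∈ Set.uIoc t0 t1 → |d s| = -d s := by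
        filter_upwards [h1] with s hs hmem
        rw [uIoc_of_le h01] at hmem
        have hlt : s < t1 := lt_of_le_of_ne hmem.2 hs
        have h2 : (0:ℝ) < t1 - s := by linarith
        have h3 : t1 - s ≤ t2 - s := by linarith
        have h4 := Real.rpow_le_rpow_of_nonpos h2 h3 (le_of_lt he0)
        apply abs_of_nonpos
        simp only [hd]; linarith
      rw [intervalIntegral.integral_congr_ae hae, intervalIntegral.integral_neg, hX]
      rw [neg_div']
      gcongr
      exact neg_le_abs _
  have hfirst : |∫ s in t0..t1, d s * η s| ≤ M * (|X| / (e + 1)) := by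
    have hbd : IntervalIntegrable (fun s => |d s| * M) volume t0 t1 := by
      have h6 := hdint.norm.mul_const M
      simpa only [Real.norm_eq_abs] using h6
    have h7 : ∀ᵐ t ∂(volume.restrict (Set.uIoc t0 t1)), ‖d t * η t‖ ≤ |d t| * M := by
      apply Eventually.of_forall
      intro t
      rw [norm_mul, Real.norm_eq_abs, Real.norm_eq_abs]
      exact mul_le_mul_of_nonneg_left (hM t) (abs_nonneg _)
    have h8 : (0:ℝ) ≤ ∫ s in t0..t1, |d s| :=
      intervalIntegral.integral_nonneg h01 (fun s _ => abs_nonneg _)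
    calc |∫ s in t0..t1, d s * η s| = ‖∫ s in t0..t1, d s * η s‖ := (Real.norm_eq_abs _).symm
      _ ≤ |∫ s in t0..t1, |d s| * M| := intervalIntegral.norm_integral_le_abs_of_norm_le h7 hbd
      _ = |(∫ s in t0..t1, |d s|) * M| := by rw [intervalIntegral.integral_mul_const]
      _ = (∫ s in t0..t1, |d s|) * M := abs_of_nonneg (mul_nonneg h8 hM0)
      _ ≤ (|X| / (e + 1)) * M := mul_le_mul_of_nonneg_right habs_le hM0
      _ = M * (|X| / (e + 1)) := mul_comm _ _
  have hsecond : |∫ s in t1..t2, (t2 - s) ^ e * η s| ≤ M * (t2 - t1) ^ (e + 1) / (e + 1) :=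
    kernel_mul_bound t1 t2 e M h12 he hη hM
  rw [hdiff]
  calc |(∫ s in t0..t1, d s * η s) + ∫ s in t1..t2, (t2 - s) ^ e * η s|
      ≤ |∫ s in t0..t1, d s * η s| + |∫ s in t1..t2, (t2 - s) ^ e * η s| := abs_add_le _ _
    _ ≤ M * (|X| / (e + 1)) + M * (t2 - t1) ^ (e + 1) / (e + 1) := add_le_add hfirst hsecond
    _ = M * (|X| + (t2 - t1) ^ (e + 1)) / (e + 1) := by ring

lemma kernel_G_contOn {η : ℝ → ℝ} (t0 T e M : ℝ) (he : -1 < e) (hη : Continuous η)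
    (hM : ∀ s, |η s| ≤ M) :
    ContinuousOn (fun t => ∫ s in t0..t, (t - s) ^ e * η s) (Icc t0 T) := by
  have hp : 0 < e + 1 := by linarith
  have hM0 : 0 ≤ M := le_trans (abs_nonneg _) (hM 0)
  set ψ : ℝ × ℝ → ℝ := fun q =>
    M * (|(q.2 - t0) ^ (e + 1) - (q.2 - q.1) ^ (e + 1) - (q.1 - t0) ^ (e + 1)| +
      (q.2 - q.1) ^ (e + 1)) / (e + 1) with hψdef
  have hψc : Continuous ψ := by
    apply Continuous.div_const
    apply continuous_const.mul
    apply Continuous.add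
    · apply Continuous.abs
      apply Continuous.sub
      apply Continuous.sub
      · exact (continuous_snd.sub continuous_const).rpow_const (fun _ => Or.inr (le_of_lt hp))
      · exact (continuous_snd.sub continuous_fst).rpow_const (fun _ => Or.inr (le_of_lt hp))
      · exact (continuous_fst.sub continuous_const).rpow_const (fun _ => Or.inr (le_of_lt hp))
    · exact (continuous_snd.sub continuous_fst).rpow_const (fun _ => Or.inr (le_of_lt hp))
  have hψ0 : ∀ t : ℝ, ψ (t, t) = 0 := by
    intro t
    simp only [hψdef, sub_self, Real.zero_rpow (ne_of_gt hp)]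
    simp
  intro t ht
  rw [Metric.continuousWithinAt_iff]
  intro ε hε
  have hcont : ContinuousAt ψ (t, t) := hψc.continuousAt
  rw [Metric.continuousAt_iff] at hcont
  obtain ⟨δ, hδ0, hδ⟩ := hcont ε hε
  refine ⟨δ, hδ0, fun t' ht' hdist => ?_⟩
  have hkey : ∀ u v : ℝ, t0 ≤ u → u ≤ v →
      |(∫ s in t0..v, (v - s) ^ e * η s) - ∫ s in t0..u, (u - s) ^ e * η s| ≤ ψ (u, v) :=
    fun u v hu huv => kernel_modulus t0 u v e M hu huv he hη hM
  have hψbound : ∀ u v : ℝ, dist u t < δ → dist v t < δ → ψ (u, v) < ε := by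
    intro u v h1 h2
    have h3 : dist (u, v) (t, t) < δ := by
      rw [Prod.dist_eq]
      exact max_lt h1 h2
    have h4 := hδ h3
    rw [hψ0 t, dist_zero_right, Real.norm_eq_abs] at h4
    exact lt_of_le_of_lt (le_abs_self _) h4
  rcases le_total t' t with h | h
  · rw [Real.dist_eq, abs_sub_comm]
    calc |(∫ s in t0..t, (t - s) ^ e * η s) - ∫ s in t0..t', (t' - s) ^ e * η s|
        ≤ ψ (t', t) := hkey t' t ht'.1 h
      _ < ε := hψbound t' t hdist (by simpa using hδ0)
  · rw [Real.dist_eq]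
    calc |(∫ s in t0..t', (t' - s) ^ e * η s) - ∫ s in t0..t, (t - s) ^ e * η s|
        ≤ ψ (t, t') := hkey t t' ht.1 h
      _ < ε := hψbound t t' (by simpa using hδ0) hdist

lemma term_bound (t0 T θ μ γ b : ℝ) (htT : t0 < T) (hθ0 : 0 < θ) (hθ1 : θ < 1)
    (hμ0 : 0 < μ) (hμ1 : μ < 1) (hb : 0 < b) {η : ℝ → ℝ} (hη : Continuous η)
    {M : ℝ} (hM : ∀ s, |η s| ≤ M) (i : ℕ) {t : ℝ} (ht : t ∈ Icc t0 T) :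
    |genBinom γ i * θ ^ i /
        (b * (1 - θ) ^ ((i : ℝ) - 1) * Real.Gamma ((i : ℝ) * θ + 1 - μ)) *
      ∫ s in t0..t, (t - s) ^ ((i : ℝ) * θ - μ) * η s| ≤ (M / b) * sTerm t0 T θ μ γ i := by
  have hM0 : 0 ≤ M := le_trans (abs_nonneg _) (hM 0)
  have h1θ : (0:ℝ) < 1 - θ := by linarith
  have hiθ : (0:ℝ) ≤ (i:ℝ) * θ := by positivity
  have he : -1 < (i:ℝ) * θ - μ := by linarith
  have hppos : (0:ℝ) < (i:ℝ) * θ + 1 - μ := by linarith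
  have hΓp : 0 < Real.Gamma ((i:ℝ) * θ + 1 - μ) := Real.Gamma_pos_of_pos hppos
  have hκ : (0:ℝ) < (1 - θ) ^ ((i:ℝ) - 1) := Real.rpow_pos_of_pos h1θ _
  have hT0 : (0:ℝ) < T - t0 := by linarith
  have hexp : (i:ℝ) * θ - μ + 1 = (i:ℝ) * θ + 1 - μ := by ring
  have hint : |∫ s in t0..t, (t - s) ^ ((i:ℝ) * θ - μ) * η s|
      ≤ M * (T - t0) ^ ((i:ℝ) * θ + 1 - μ) / ((i:ℝ) * θ + 1 - μ) := by
    refine le_trans (kernel_mul_bound t0 t _ M ht.1 he hη hM) ?_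
    rw [hexp]
    gcongr
    · linarith [ht.1]
    · exact ht.2
  have habs : |genBinom γ i * θ ^ i /
      (b * (1 - θ) ^ ((i:ℝ) - 1) * Real.Gamma ((i:ℝ) * θ + 1 - μ))|
      = |genBinom γ i| * θ ^ i / (b * (1 - θ) ^ ((i:ℝ) - 1) * Real.Gamma ((i:ℝ) * θ + 1 - μ)) := by
    rw [abs_div, abs_mul, abs_of_nonneg (by positivity : (0:ℝ) ≤ θ ^ i),
      abs_of_pos (by positivity : (0:ℝ) < b * (1 - θ) ^ ((i:ℝ) - 1) *
        Real.Gamma ((i:ℝ) * θ + 1 - μ))]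
  have hΓq : Real.Gamma ((i:ℝ) * θ + 2 - μ)
      = ((i:ℝ) * θ + 1 - μ) * Real.Gamma ((i:ℝ) * θ + 1 - μ) := by
    rw [show (i:ℝ) * θ + 2 - μ = ((i:ℝ) * θ + 1 - μ) + 1 by ring,
      Real.Gamma_add_one (ne_of_gt hppos)]
  calc |genBinom γ i * θ ^ i /
        (b * (1 - θ) ^ ((i:ℝ) - 1) * Real.Gamma ((i:ℝ) * θ + 1 - μ)) *
      ∫ s in t0..t, (t - s) ^ ((i:ℝ) * θ - μ) * η s|
      = |genBinom γ i| * θ ^ i / (b * (1 - θ) ^ ((i:ℝ) - 1) * Real.Gamma ((i:ℝ) * θ + 1 - μ)) *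
        |∫ s in t0..t, (t - s) ^ ((i:ℝ) * θ - μ) * η s| := by rw [abs_mul, habs]
    _ ≤ |genBinom γ i| * θ ^ i / (b * (1 - θ) ^ ((i:ℝ) - 1) * Real.Gamma ((i:ℝ) * θ + 1 - μ)) *
        (M * (T - t0) ^ ((i:ℝ) * θ + 1 - μ) / ((i:ℝ) * θ + 1 - μ)) := by
        apply mul_le_mul_of_nonneg_left hint (by positivity)
    _ = (M / b) * sTerm t0 T θ μ γ i := by
        unfold sTerm
        rw [hΓq]
        field_simp

lemma ABIntegral_congr (t0 b θ μ γ t : ℝ) {η₁ η₂ : ℝ → ℝ} (hle : t0 ≤ t)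
    (h : ∀ s ∈ Icc t0 t, η₁ s = η₂ s) :
    ABIntegral t0 b θ μ γ η₁ t = ABIntegral t0 b θ μ γ η₂ t := by
  unfold ABIntegral
  apply tsum_congr; intro i
  congr 1
  apply intervalIntegral.integral_congr
  intro s hs
  rw [uIcc_of_le hle] at hs
  simp only [h s hs]

lemma ABIntegral_same (t0 b θ μ γ : ℝ) (η : ℝ → ℝ) : ABIntegral t0 b θ μ γ η t0 = 0 := by
  unfold ABIntegral
  simp [intervalIntegral.integral_same]


/-- Existence and uniqueness, case `μ ≠ 1`. -/
theorem existence_uniqueness_mu_ne_one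
    (t0 T θ μ γ b A x0 : ℝ) (htT : t0 < T) (hθ0 : 0 < θ) (hθ1 : θ < 1)
    (hμ0 : 0 < μ) (hμ1 : μ < 1) (hγ : 0 < γ) (hb : 0 < b) (hA : 0 < A)
    (f : ℝ → ℝ → ℝ)
    (hfc : ContinuousOn (fun p : ℝ × ℝ => f p.1 p.2) (Set.Icc t0 T ×ˢ Set.univ))
    (hLip : ∀ t ∈ Set.Icc t0 T, ∀ y1 y2 : ℝ, |f t y1 - f t y2| ≤ A * |y1 - y2|)
    (hC1 : C1const t0 T b θ μ γ A < 1) :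
    ∃ x : ℝ → ℝ, ContinuousOn x (Set.Icc t0 T) ∧
      (∀ t ∈ Set.Icc t0 T, x t = x0 + ABIntegral t0 b θ μ γ (fun s => f s (x s)) t) ∧
      x t0 = x0 ∧
      (∀ y : ℝ → ℝ, ContinuousOn y (Set.Icc t0 T) →
        (∀ t ∈ Set.Icc t0 T, y t = x0 + ABIntegral t0 b θ μ γ (fun s => f s (y s)) t) →
        ∀ t ∈ Set.Icc t0 T, y t = x t) := by
  have hle : t0 ≤ T := le_of_lt htT
  have h1θ : (0:ℝ) < 1 - θ := by linarith
  have hSsum : Summable (sTerm t0 T θ μ γ) := summable_sTerm t0 T θ μ γ htT hθ0 hθ1 hμ0 hμ1 hγ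
  have hSnn : ∀ i, 0 ≤ sTerm t0 T θ μ γ i :=
    sTerm_nonneg t0 T θ μ γ hle hθ0 hθ1 (by linarith)
  have he : ∀ i : ℕ, -1 < (i:ℝ) * θ - μ := by
    intro i
    have : (0:ℝ) ≤ (i:ℝ) * θ := by positivity
    linarith
  set pr : ℝ → ↥(Icc t0 T) := fun s => projIcc t0 T hle s with hprdef
  -- continuity of q ↦ f q (x q)
  have hfq : ∀ x : C(↥(Icc t0 T), ℝ), Continuous (fun q : ↥(Icc t0 T) => f ↑q (x q)) := by
    intro x
    exact hfc.comp_continuous (continuous_subtype_val.prodMk x.continuous)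
      (fun q => ⟨q.2, mem_univ _⟩)
  set g : C(↥(Icc t0 T), ℝ) → ℝ → ℝ := fun x s => f ↑(pr s) (x (pr s)) with hgdef
  have hgc : ∀ x, Continuous (g x) := by
    intro x
    exact (hfq x).comp continuous_projIcc
  have hgbound : ∀ x : C(↥(Icc t0 T), ℝ), ∀ s,
      |g x s| ≤ ‖ContinuousMap.mk _ (hfq x)‖ := by
    intro x s
    have h1 := (ContinuousMap.mk _ (hfq x)).norm_coe_le_norm (pr s)
    rwa [Real.norm_eq_abs] at h1
  -- the raw operator
  set Φraw : C(↥(Icc t0 T), ℝ) → ℝ → ℝ := fun x t =>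
    x0 + ∑' i : ℕ, genBinom γ i * θ ^ i /
        (b * (1 - θ) ^ ((i : ℝ) - 1) * Real.Gamma ((i : ℝ) * θ + 1 - μ)) *
      ∫ s in t0..t, (t - s) ^ ((i : ℝ) * θ - μ) * g x s with hΦrawdef
  have hΦraw_eq : ∀ x t, Φraw x t = x0 + ABIntegral t0 b θ μ γ (g x) t := fun x t => rfl
  -- summability of the term series
  have hsum_terms : ∀ (η : ℝ → ℝ), Continuous η → ∀ M : ℝ, (∀ s, |η s| ≤ M) →
      ∀ t ∈ Icc t0 T, Summable (fun i : ℕ => genBinom γ i * θ ^ i /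
        (b * (1 - θ) ^ ((i : ℝ) - 1) * Real.Gamma ((i : ℝ) * θ + 1 - μ)) *
      ∫ s in t0..t, (t - s) ^ ((i : ℝ) * θ - μ) * η s) := by
    intro η hη M hM t ht
    apply Summable.of_norm
    refine Summable.of_nonneg_of_le (fun i => norm_nonneg _)
      (fun i => ?_) (hSsum.mul_left (M / b))
    simp only [Real.norm_eq_abs]
    exact term_bound t0 T θ μ γ b htT hθ0 hθ1 hμ0 hμ1 hb hη hM i ht
  -- continuity of Φraw x
  have hΦcont : ∀ x, ContinuousOn (Φraw x) (Icc t0 T) := by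
    intro x
    apply ContinuousOn.add continuousOn_const
    apply continuousOn_tsum (u := fun i => (‖ContinuousMap.mk _ (hfq x)‖ / b) * sTerm t0 T θ μ γ i)
    · intro i
      exact ContinuousOn.mul continuousOn_const
        (kernel_G_contOn t0 T _ _ (he i) (hgc x) (hgbound x))
    · exact hSsum.mul_left _
    · intro i t ht
      simp only [Real.norm_eq_abs]
      exact term_bound t0 T θ μ γ b htT hθ0 hθ1 hμ0 hμ1 hb (hgc x) (hgbound x) i ht
  -- the operator on the function space
  set Φ : C(↥(Icc t0 T), ℝ) → C(↥(Icc t0 T), ℝ) := fun x =>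
    ContinuousMap.mk ((Icc t0 T).restrict (Φraw x)) ((hΦcont x).restrict) with hΦdef
  -- the contraction constant
  have hKnn : 0 ≤ C1const t0 T b θ μ γ A := by
    apply mul_nonneg (by positivity)
    exact tsum_nonneg hSnn
  -- Lipschitz estimate
  have hlip : ∀ x y : C(↥(Icc t0 T), ℝ), ∀ t ∈ Icc t0 T,
      |Φraw x t - Φraw y t| ≤ C1const t0 T b θ μ γ A * dist x y := by
    intro x y t ht
    have hgd : ∀ s, |g x s - g y s| ≤ A * dist x y := by
      intro s
      refine le_trans (hLip ↑(pr s) (pr s).2 (x (pr s)) (y (pr s))) ?_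
      have h2 := ContinuousMap.dist_apply_le_dist (f := x) (g := y) (pr s)
      rw [Real.dist_eq] at h2
      exact mul_le_mul_of_nonneg_left h2 hA.le
    have hgdc : Continuous (fun s => g x s - g y s) := (hgc x).sub (hgc y)
    have hsx := hsum_terms (g x) (hgc x) _ (hgbound x) t ht
    have hsy := hsum_terms (g y) (hgc y) _ (hgbound y) t ht
    have hsd := hsum_terms (fun s => g x s - g y s) hgdc (A * dist x y) hgd t ht
    have hdiff : Φraw x t - Φraw y t
        = ∑' i : ℕ, genBinom γ i * θ ^ i /
            (b * (1 - θ) ^ ((i : ℝ) - 1) * Real.Gamma ((i : ℝ) * θ + 1 - μ)) *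
          ∫ s in t0..t, (t - s) ^ ((i : ℝ) * θ - μ) * (g x s - g y s) := by
      have h3 : Φraw x t - Φraw y t
          = ∑' i : ℕ, (genBinom γ i * θ ^ i /
              (b * (1 - θ) ^ ((i : ℝ) - 1) * Real.Gamma ((i : ℝ) * θ + 1 - μ)) *
            (∫ s in t0..t, (t - s) ^ ((i : ℝ) * θ - μ) * g x s) -
            genBinom γ i * θ ^ i /
              (b * (1 - θ) ^ ((i : ℝ) - 1) * Real.Gamma ((i : ℝ) * θ + 1 - μ)) *
            ∫ s in t0..t, (t - s) ^ ((i : ℝ) * θ - μ) * g y s) := by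
        simp only [hΦrawdef]
        rw [Summable.tsum_sub hsx hsy]
        exact add_sub_add_left_eq_sub _ _ _
      rw [h3]
      apply tsum_congr
      intro i
      rw [← mul_sub, ← intervalIntegral.integral_sub
        (kernel_mul_intble t0 t t _ (he i) (hgc x)) (kernel_mul_intble t0 t t _ (he i) (hgc y))]
      congr 1
      apply intervalIntegral.integral_congr
      intro s _
      ring
    rw [hdiff]
    have hbnd : ∀ i : ℕ, ‖genBinom γ i * θ ^ i /
        (b * (1 - θ) ^ ((i : ℝ) - 1) * Real.Gamma ((i : ℝ) * θ + 1 - μ)) *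
        ∫ s in t0..t, (t - s) ^ ((i : ℝ) * θ - μ) * (g x s - g y s)‖
        ≤ (A * dist x y / b) * sTerm t0 T θ μ γ i := by
      intro i
      simp only [Real.norm_eq_abs]
      exact term_bound t0 T θ μ γ b htT hθ0 hθ1 hμ0 hμ1 hb hgdc hgd i ht
    have hsn : Summable (fun i : ℕ => ‖genBinom γ i * θ ^ i /
        (b * (1 - θ) ^ ((i : ℝ) - 1) * Real.Gamma ((i : ℝ) * θ + 1 - μ)) *
        ∫ s in t0..t, (t - s) ^ ((i : ℝ) * θ - μ) * (g x s - g y s)‖) :=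
      Summable.of_nonneg_of_le (fun i => norm_nonneg _) hbnd
        (hSsum.mul_left (A * dist x y / b))
    have hnorm : ‖∑' i : ℕ, genBinom γ i * θ ^ i /
        (b * (1 - θ) ^ ((i : ℝ) - 1) * Real.Gamma ((i : ℝ) * θ + 1 - μ)) *
        ∫ s in t0..t, (t - s) ^ ((i : ℝ) * θ - μ) * (g x s - g y s)‖
        ≤ ∑' i : ℕ, (A * dist x y / b) * sTerm t0 T θ μ γ i :=
      le_trans (norm_tsum_le_tsum_norm hsn)
        (Summable.tsum_le_tsum hbnd hsn (hSsum.mul_left (A * dist x y / b)))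
    rw [Real.norm_eq_abs] at hnorm
    refine le_trans hnorm ?_
    rw [tsum_mul_left]
    unfold C1const
    have : A * dist x y / b * ∑' i, sTerm t0 T θ μ γ i
        = (A / b * ∑' i, sTerm t0 T θ μ γ i) * dist x y := by ring
    rw [this]
    exact le_of_eq rfl
  have hlipΦ : LipschitzWith (Real.toNNReal (C1const t0 T b θ μ γ A)) Φ := by
    apply LipschitzWith.of_dist_le_mul
    intro x y
    rw [Real.coe_toNNReal _ hKnn,
      ContinuousMap.dist_le (mul_nonneg hKnn dist_nonneg)]
    intro q
    rw [Real.dist_eq]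
    exact hlip x y ↑q q.2
  have hcontr : ContractingWith (Real.toNNReal (C1const t0 T b θ μ γ A)) Φ := by
    constructor
    · rw [← NNReal.coe_lt_coe, Real.coe_toNNReal _ hKnn, NNReal.coe_one]
      exact hC1
    · exact hlipΦ
  -- fixed point
  set xstar : C(↥(Icc t0 T), ℝ) := ContractingWith.fixedPoint Φ hcontr with hxstardef
  have hfix : Function.IsFixedPt Φ xstar := ContractingWith.fixedPoint_isFixedPt hcontr
  set xfun : ℝ → ℝ := fun t => xstar (pr t) with hxfundef
  -- the equation for any fixed point
  have hfix_eq : ∀ (z : C(↥(Icc t0 T), ℝ)), Function.IsFixedPt Φ z →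
      ∀ t (ht : t ∈ Icc t0 T), z ⟨t, ht⟩ = x0 + ABIntegral t0 b θ μ γ
        (fun s => f s (z (pr s))) t := by
    intro z hz t ht
    have h1 : Φ z ⟨t, ht⟩ = z ⟨t, ht⟩ := by rw [hz]
    have h2 : Φ z ⟨t, ht⟩ = Φraw z t := rfl
    rw [← h1, h2, hΦraw_eq]
    congr 1
    apply ABIntegral_congr t0 b θ μ γ t ht.1
    intro s hs
    have hsI : s ∈ Icc t0 T := ⟨hs.1, le_trans hs.2 ht.2⟩
    have h4 : pr s = ⟨s, hsI⟩ := projIcc_of_mem hle hsI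
    simp only [hgdef, h4]
  refine ⟨xfun, ?_, ?_, ?_, ?_⟩
  · exact (xstar.continuous.comp continuous_projIcc).continuousOn
  · intro t ht
    have h4 : pr t = ⟨t, ht⟩ := projIcc_of_mem hle ht
    have h5 : xfun t = xstar ⟨t, ht⟩ := by rw [hxfundef]; simp only [h4]
    rw [h5, hfix_eq xstar hfix t ht]
  · have h6 := hfix_eq xstar hfix t0 (left_mem_Icc.2 hle)
    have h4 : pr t0 = ⟨t0, left_mem_Icc.2 hle⟩ := projIcc_of_mem hle _
    have h5 : xfun t0 = xstar ⟨t0, left_mem_Icc.2 hle⟩ := by rw [hxfundef]; simp only [h4]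
    rw [h5, h6, ABIntegral_same, add_zero]
  · intro y hyc hyeq t ht
    set ystar : C(↥(Icc t0 T), ℝ) := ContinuousMap.mk ((Icc t0 T).restrict y) hyc.restrict
      with hystardef
    have hyfix : Function.IsFixedPt Φ ystar := by
      apply ContinuousMap.ext
      rintro ⟨u, hu⟩
      have h2 : Φ ystar ⟨u, hu⟩ = Φraw ystar u := rfl
      rw [h2, hΦraw_eq]
      have h7 : ystar ⟨u, hu⟩ = y u := rfl
      have h8 : ABIntegral t0 b θ μ γ (g ystar) u
          = ABIntegral t0 b θ μ γ (fun s => f s (y s)) u := by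
        apply ABIntegral_congr t0 b θ μ γ u hu.1
        intro s hs
        have hsI : s ∈ Icc t0 T := ⟨hs.1, le_trans hs.2 hu.2⟩
        have h4 : pr s = ⟨s, hsI⟩ := projIcc_of_mem hle hsI
        simp only [hgdef, h4]
        rfl
      rw [h8, h7, ← hyeq u hu]
    have h9 : ystar = xstar := ContractingWith.fixedPoint_unique hcontr hyfix
    have h4 : pr t = ⟨t, ht⟩ := projIcc_of_mem hle ht
    have h5 : xfun t = xstar ⟨t, ht⟩ := by rw [hxfundef]; simp only [h4]
    have h10 : y t = ystar ⟨t, ht⟩ := rfl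
    rw [h10, h9, h5]
end

section
/- Let t0 < T, θ ∈ (0,1), 0 < μ < 1, γ > 0, b > 0, x0 ∈ ℝ, and let f : [t0,T] × ℝ → ℝ be continuous and satisfy |f(t,y1) − f(t,y2)| ≤ A|y1 − y2| for all t ∈ [t0,T] and y1, y2 ∈ ℝ, with A > 0. Define (Υx)(t) = x0 + (I^{θ,μ,γ}(f(·, x(·))))(t) for continuous x : [t0,T] → ℝ. Then for all continuous x1, x2 : [t0,T] → ℝ and all t ∈ [t0,T], |(Υx1)(t) − (Υx2)(t)| ≤ C1(T,A) · sup_{s ∈ [t0,T]} |x1(s) − x2(s)|. -/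
open Real MeasureTheory Set

section Helpers

lemma genBinom_abs_le (γ : ℝ) (i : ℕ) :
    |genBinom γ i| ≤ (1 + |γ|) ^ i := by
  unfold genBinom
  rw [abs_div, Finset.abs_prod, Nat.abs_cast, div_le_iff₀ (by positivity)]
  calc ∏ j ∈ Finset.range i, |γ - (j:ℝ)|
      ≤ ∏ j ∈ Finset.range i, ((1 + |γ|) * ((j:ℝ) + 1)) := by
        apply Finset.prod_le_prod (fun j _ => abs_nonneg _)
        intro j _
        have h1 : (0:ℝ) ≤ j := Nat.cast_nonneg j
        have h2 : (0:ℝ) ≤ |γ| := abs_nonneg γ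
        calc |γ - (j:ℝ)| ≤ |γ| + (j:ℝ) := by
              have h3 : |γ - (j:ℝ)| ≤ |γ| + |(j:ℝ)| := abs_sub _ _
              rwa [abs_of_nonneg h1] at h3
          _ ≤ (1 + |γ|) * ((j:ℝ) + 1) := by nlinarith
    _ = (1 + |γ|) ^ i * (Nat.factorial i : ℝ) := by
        rw [Finset.prod_mul_distrib, Finset.prod_const, Finset.card_range]
        congr 1
        rw [← Finset.prod_range_add_one_eq_factorial]
        push_cast
        ring

lemma key_bound (K θ d : ℝ) (hK : 0 ≤ K) (hθ : 0 < θ) (hd : 0 < d) :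
    ∃ C : ℝ, 0 ≤ C ∧ ∀ i : ℕ, 3 ≤ (i:ℝ) * θ + d →
      K ^ i / Real.Gamma ((i:ℝ) * θ + d) ≤ C * ((2:ℝ) ^ (-θ)) ^ i := by
  set σ : ℝ := max (K ^ (1/θ)) 1 with hσdef
  have hσ1 : (1:ℝ) ≤ σ := le_max_right _ _
  have hσ0 : (0:ℝ) < σ := lt_of_lt_of_le one_pos hσ1
  refine ⟨σ ^ (2:ℝ) * Real.exp (2*σ) * (2:ℝ) ^ (2 - d), by positivity, ?_⟩
  intro i hx
  set x : ℝ := (i:ℝ) * θ + d with hxdef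
  have hx0 : (0:ℝ) ≤ x := by linarith
  set n : ℕ := ⌊x⌋₊ with hndef
  have hn3 : 3 ≤ n := Nat.le_floor (by exact_mod_cast hx)
  have hnx : (n:ℝ) ≤ x := Nat.floor_le hx0
  have hxn : x < n + 1 := Nat.lt_floor_add_one x
  obtain ⟨m, hm⟩ : ∃ m, n = m + 1 := ⟨n - 1, by omega⟩
  have hm2 : 2 ≤ m := by omega
  have hG : (Nat.factorial m : ℝ) ≤ Real.Gamma x := by
    have h1 : Real.Gamma (n:ℝ) ≤ Real.Gamma x := by
      rcases eq_or_lt_of_le hnx with h | h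
      · rw [h]
      · exact le_of_lt (Real.Gamma_strictMonoOn_Ici (by simp; exact_mod_cast (by omega : 2 ≤ n))
          (by simp; linarith [show (2:ℝ) ≤ n by exact_mod_cast (by omega : 2 ≤ n)]) h)
    have h2 : Real.Gamma (n:ℝ) = (Nat.factorial m : ℝ) := by
      rw [hm]; push_cast; exact_mod_cast Real.Gamma_nat_eq_factorial m
    linarith
  have hGpos : 0 < Real.Gamma x := Real.Gamma_pos_of_pos (by linarith)
  have hKσ : K ≤ σ ^ θ := by
    have h : (K ^ (1/θ)) ^ θ ≤ σ ^ θ :=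
      Real.rpow_le_rpow (by positivity) (le_max_left _ _) hθ.le
    rwa [← Real.rpow_mul hK, one_div, inv_mul_cancel₀ hθ.ne', Real.rpow_one] at h
  have hKi : K ^ i ≤ σ ^ (2:ℝ) * σ ^ m := by
    have h1 : K ^ i ≤ (σ ^ θ) ^ i := pow_le_pow_left₀ hK hKσ i
    have h2 : (σ ^ θ) ^ i = σ ^ (θ * i) := by
      rw [← Real.rpow_natCast (σ ^ θ) i, ← Real.rpow_mul hσ0.le]
    have h3 : θ * i ≤ (m:ℝ) + 2 := by
      have h3a : (i:ℝ) * θ = x - d := by rw [hxdef]; ring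
      have hmn : (n:ℝ) = m + 1 := by exact_mod_cast hm
      nlinarith
    have h4 : σ ^ (θ * (i:ℝ)) ≤ σ ^ ((m:ℝ) + 2) :=
      Real.rpow_le_rpow_of_exponent_le hσ1 h3
    have h5 : σ ^ ((m:ℝ) + 2) = σ ^ (2:ℝ) * σ ^ m := by
      rw [Real.rpow_add hσ0, Real.rpow_natCast]; ring
    calc K ^ i ≤ σ ^ (θ * (i:ℝ)) := by rw [← h2]; exact h1
      _ ≤ _ := by rw [← h5] at *; exact h4
  have hfact : σ ^ m / (Nat.factorial m : ℝ) ≤ Real.exp (2*σ) / 2 ^ m := by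
    have h := Real.pow_div_factorial_le_exp (x := 2*σ) (by linarith) m
    rw [mul_pow] at h
    rw [div_le_div_iff₀ (by positivity) (by positivity)]
    rw [div_le_iff₀ (by positivity)] at h
    nlinarith [pow_pos hσ0 m, pow_pos (show (0:ℝ) < 2 by norm_num) m,
      pow_nonneg hσ0.le m]
  have h2m : (2:ℝ) ^ (x - 2) ≤ 2 ^ m := by
    rw [← Real.rpow_natCast 2 m]
    apply Real.rpow_le_rpow_of_exponent_le one_le_two
    have hmn : (n:ℝ) = m + 1 := by exact_mod_cast hm
    linarith
  have h2mpos : (0:ℝ) < 2 ^ m := by positivity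
  have hfin : (1:ℝ) / 2 ^ m ≤ (2:ℝ) ^ (2 - d) * ((2:ℝ) ^ (-θ)) ^ i := by
    have e1 : (2:ℝ) ^ (2 - d) * ((2:ℝ) ^ (-θ)) ^ i = (2:ℝ) ^ (2 - x) := by
      rw [← Real.rpow_natCast ((2:ℝ) ^ (-θ)) i, ← Real.rpow_mul (by norm_num),
        ← Real.rpow_add (by norm_num)]
      congr 1
      rw [hxdef]; ring
    rw [e1, div_le_iff₀ h2mpos, ← Real.rpow_natCast 2 m, ← Real.rpow_add (by norm_num)]
    have h6 : (0:ℝ) ≤ 2 - x + m := by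
      have hmn : (n:ℝ) = m + 1 := by exact_mod_cast hm
      linarith
    calc (1:ℝ) = (2:ℝ) ^ (0:ℝ) := by rw [Real.rpow_zero]
      _ ≤ (2:ℝ) ^ (2 - x + (m:ℝ)) := Real.rpow_le_rpow_of_exponent_le one_le_two h6
  have hKnn : (0:ℝ) ≤ K ^ i := pow_nonneg hK i
  have hmf : (0:ℝ) < (Nat.factorial m : ℝ) := by positivity
  calc K ^ i / Real.Gamma x ≤ K ^ i / (Nat.factorial m : ℝ) := by
        gcongr
    _ ≤ (σ ^ (2:ℝ) * σ ^ m) / (Nat.factorial m : ℝ) := by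
        gcongr
    _ ≤ σ ^ (2:ℝ) * (Real.exp (2*σ) / 2 ^ m) := by
        rw [mul_div_assoc]
        exact mul_le_mul_of_nonneg_left hfact (by positivity)
    _ = (σ ^ (2:ℝ) * Real.exp (2*σ)) * (1 / 2 ^ m) := by ring
    _ ≤ (σ ^ (2:ℝ) * Real.exp (2*σ)) * ((2:ℝ) ^ (2 - d) * ((2:ℝ) ^ (-θ)) ^ i) := by
        exact mul_le_mul_of_nonneg_left hfin (by positivity)
    _ = σ ^ (2:ℝ) * Real.exp (2*σ) * (2:ℝ) ^ (2 - d) * ((2:ℝ) ^ (-θ)) ^ i := by ring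

lemma summable_pow_div_gamma (K θ d : ℝ) (hK : 0 ≤ K) (hθ : 0 < θ) (hd : 0 < d) :
    Summable (fun i : ℕ => K ^ i / Real.Gamma ((i : ℝ) * θ + d)) := by
  obtain ⟨C, hC0, hC⟩ := key_bound K θ d hK hθ hd
  obtain ⟨N, hN⟩ : ∃ N : ℕ, 3 ≤ (N:ℝ) * θ + d := by
    obtain ⟨N, hN⟩ := exists_nat_gt ((3 - d)/θ)
    exact ⟨N, by rw [div_lt_iff₀ hθ] at hN; linarith⟩
  rw [← summable_nat_add_iff N]
  have hr0 : (0:ℝ) ≤ (2:ℝ) ^ (-θ) := by positivity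
  have hr1 : (2:ℝ) ^ (-θ) < 1 := by
    rw [Real.rpow_neg (by norm_num), inv_lt_one_iff₀]
    right
    calc (1:ℝ) = 2 ^ (0:ℝ) := by rw [Real.rpow_zero]
      _ < 2 ^ θ := Real.rpow_lt_rpow_of_exponent_lt one_lt_two hθ
  apply Summable.of_nonneg_of_le (fun i => ?_) (fun i => ?_)
    (((summable_geometric_of_lt_one hr0 hr1).mul_left C).mul_left (((2:ℝ) ^ (-θ)) ^ N))
  · have hg : 0 < Real.Gamma (((i+N:ℕ):ℝ) * θ + d) := by
      apply Real.Gamma_pos_of_pos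
      positivity
    positivity
  · have h3 : 3 ≤ ((i+N:ℕ):ℝ) * θ + d := by
      push_cast
      nlinarith [Nat.cast_nonneg (α := ℝ) i]
    calc K ^ (i+N) / Real.Gamma (((i+N:ℕ):ℝ) * θ + d) ≤ C * ((2:ℝ) ^ (-θ)) ^ (i+N) :=
          hC (i+N) h3
      _ = ((2:ℝ) ^ (-θ)) ^ N * (C * ((2:ℝ) ^ (-θ)) ^ i) := by rw [pow_add]; ring

lemma summable_majorant (θ μ γ R : ℝ) (hθ0 : 0 < θ) (hθ1 : θ < 1)
    (hμ0 : 0 < μ) (hμ1 : μ < 1) (hR : 0 < R) :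
    Summable (fun i : ℕ => |genBinom γ i| * θ ^ i * R ^ ((i:ℝ) * θ + 1 - μ) /
      ((1 - θ) ^ ((i:ℝ) - 1) * Real.Gamma ((i:ℝ) * θ + 2 - μ))) := by
  have h1θ : (0:ℝ) < 1 - θ := by linarith
  set K : ℝ := (1 + |γ|) * (θ * R ^ θ / (1 - θ)) with hK
  have hK0 : 0 ≤ K := by positivity
  have hsum := (summable_pow_div_gamma K θ (2 - μ) hK0 hθ0 (by linarith)).mul_left
    ((1 - θ) * R ^ (1 - μ))
  apply Summable.of_nonneg_of_le (fun i => ?_) (fun i => ?_) hsum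
  · have hΓ : 0 < Real.Gamma ((i:ℝ) * θ + 2 - μ) := by
      apply Real.Gamma_pos_of_pos
      have h : (0:ℝ) ≤ (i:ℝ) * θ := by positivity
      linarith
    positivity
  · have hΓ : 0 < Real.Gamma ((i:ℝ) * θ + 2 - μ) := by
      apply Real.Gamma_pos_of_pos
      have h : (0:ℝ) ≤ (i:ℝ) * θ := by positivity
      linarith
    have e0 : (i:ℝ) * θ + (2 - μ) = (i:ℝ) * θ + 2 - μ := by ring
    rw [e0]
    have e1 : R ^ ((i:ℝ) * θ + 1 - μ) = (R ^ θ) ^ i * R ^ (1 - μ) := by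
      rw [show (i:ℝ) * θ + 1 - μ = θ * (i:ℝ) + (1 - μ) by ring, Real.rpow_add hR,
        Real.rpow_mul hR.le, Real.rpow_natCast]
    have e2 : (1 - θ) ^ ((i:ℝ) - 1) = (1 - θ) ^ i / (1 - θ) := by
      rw [Real.rpow_sub h1θ, Real.rpow_one, Real.rpow_natCast]
    calc |genBinom γ i| * θ ^ i * R ^ ((i:ℝ) * θ + 1 - μ) /
        ((1 - θ) ^ ((i:ℝ) - 1) * Real.Gamma ((i:ℝ) * θ + 2 - μ))
        = ((1 - θ) * R ^ (1 - μ)) *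
          ((|genBinom γ i| * (θ * R ^ θ / (1 - θ)) ^ i) / Real.Gamma ((i:ℝ) * θ + 2 - μ)) := by
          rw [e1, e2, div_pow, mul_pow]
          field_simp
      _ ≤ ((1 - θ) * R ^ (1 - μ)) *
          (((1 + |γ|) ^ i * (θ * R ^ θ / (1 - θ)) ^ i) / Real.Gamma ((i:ℝ) * θ + 2 - μ)) := by
          gcongr
          exact genBinom_abs_le γ i
      _ = ((1 - θ) * R ^ (1 - μ)) * (K ^ i / Real.Gamma ((i:ℝ) * θ + 2 - μ)) := by
          rw [hK, mul_pow]

lemma intInt_rpow_mul (t0 t a : ℝ) (ha : -1 < a) (g : ℝ → ℝ)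
    (hg : ContinuousOn g (Set.uIcc t0 t)) :
    IntervalIntegrable (fun s => (t - s) ^ a * g s) volume t0 t := by
  apply IntervalIntegrable.mul_continuousOn _ hg
  have h := (intervalIntegral.intervalIntegrable_rpow' ha (a := t - t0) (b := t - t)).comp_sub_left t
  simpa using h

lemma integral_rpow_sub (t0 t a : ℝ) (ha : -1 < a) :
    ∫ s in t0..t, (t - s) ^ a = (t - t0) ^ (a + 1) / (a + 1) := by
  rw [intervalIntegral.integral_comp_sub_left (fun u => u ^ a) t, sub_self,
    integral_rpow (Or.inl ha), Real.zero_rpow (by linarith : a + 1 ≠ 0)]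
  ring

lemma abs_integral_rpow_mul_le (t0 t a B : ℝ) (ht : t0 ≤ t) (ha : -1 < a)
    (g : ℝ → ℝ) (hg : ContinuousOn g (Set.Icc t0 t)) (hB : ∀ s ∈ Set.Icc t0 t, |g s| ≤ B) :
    |∫ s in t0..t, (t - s) ^ a * g s| ≤ B * ((t - t0) ^ (a + 1) / (a + 1)) := by
  have huIcc : Set.uIcc t0 t = Set.Icc t0 t := uIcc_of_le ht
  have hint : IntervalIntegrable (fun s => (t - s) ^ a * g s) volume t0 t :=
    intInt_rpow_mul _ _ _ ha g (by rwa [huIcc])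
  have hint2 : IntervalIntegrable (fun s => (t - s) ^ a * B) volume t0 t :=
    intInt_rpow_mul _ _ _ ha _ continuousOn_const
  calc |∫ s in t0..t, (t - s) ^ a * g s| ≤ ∫ s in t0..t, |(t - s) ^ a * g s| :=
        intervalIntegral.abs_integral_le_integral_abs ht
    _ ≤ ∫ s in t0..t, (t - s) ^ a * B := by
        apply intervalIntegral.integral_mono_on ht hint.abs hint2
        intro s hs
        rw [abs_mul, abs_of_nonneg (Real.rpow_nonneg (by linarith [hs.2] : (0:ℝ) ≤ t - s) a)]
        exact mul_le_mul_of_nonneg_left (hB s hs) (Real.rpow_nonneg (by linarith [hs.2]) a)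
    _ = B * ((t - t0) ^ (a + 1) / (a + 1)) := by
        rw [intervalIntegral.integral_mul_const, integral_rpow_sub t0 t a ha]
        ring

end Helpers

/-- Contraction estimate for the operator `Υ`, case `μ ≠ 1`. -/
theorem upsilon_contraction_estimate_mu_ne_one
    (t0 T θ μ γ b A x0 : ℝ) (htT : t0 < T) (hθ0 : 0 < θ) (hθ1 : θ < 1)
    (hμ0 : 0 < μ) (hμ1 : μ < 1) (hγ : 0 < γ) (hb : 0 < b) (hA : 0 < A)
    (f : ℝ → ℝ → ℝ)
    (hfc : ContinuousOn (fun p : ℝ × ℝ => f p.1 p.2) (Set.Icc t0 T ×ˢ Set.univ))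
    (hLip : ∀ t ∈ Set.Icc t0 T, ∀ y1 y2 : ℝ, |f t y1 - f t y2| ≤ A * |y1 - y2|)
    (x1 x2 : ℝ → ℝ)
    (h1c : ContinuousOn x1 (Set.Icc t0 T))
    (h2c : ContinuousOn x2 (Set.Icc t0 T)) :
    ∀ t ∈ Set.Icc t0 T,
      |(x0 + ABIntegral t0 b θ μ γ (fun s => f s (x1 s)) t) -
        (x0 + ABIntegral t0 b θ μ γ (fun s => f s (x2 s)) t)| ≤
      C1const t0 T b θ μ γ A * sSup ((fun s => |x1 s - x2 s|) '' Set.Icc t0 T) := by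
  intro t ht
  obtain ⟨ht0, htT'⟩ := ht
  have h1θ : (0:ℝ) < 1 - θ := by linarith
  set M := sSup ((fun s => |x1 s - x2 s|) '' Set.Icc t0 T) with hMdef
  have hg1 : ContinuousOn (fun s => f s (x1 s)) (Set.Icc t0 T) :=
    hfc.comp (s := Set.Icc t0 T) (f := fun s => (s, x1 s)) (continuousOn_id.prodMk h1c) (fun s hs => ⟨hs, Set.mem_univ _⟩)
  have hg2 : ContinuousOn (fun s => f s (x2 s)) (Set.Icc t0 T) :=
    hfc.comp (s := Set.Icc t0 T) (f := fun s => (s, x2 s)) (continuousOn_id.prodMk h2c) (fun s hs => ⟨hs, Set.mem_univ _⟩)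
  set g : ℝ → ℝ := fun s => f s (x1 s) - f s (x2 s) with hgdef
  have hgd : ContinuousOn g (Set.Icc t0 T) := hg1.sub hg2
  have hbdd : BddAbove ((fun s => |x1 s - x2 s|) '' Set.Icc t0 T) :=
    (isCompact_Icc.image_of_continuousOn ((h1c.sub h2c).abs)).bddAbove
  have hM : ∀ s ∈ Set.Icc t0 T, |x1 s - x2 s| ≤ M :=
    fun s hs => le_csSup hbdd (Set.mem_image_of_mem _ hs)
  have hM0 : 0 ≤ M := le_trans (abs_nonneg _) (hM t0 ⟨le_refl _, htT.le⟩)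
  have hgM : ∀ s ∈ Set.Icc t0 T, |g s| ≤ A * M := fun s hs =>
    le_trans (hLip s hs _ _) (mul_le_mul_of_nonneg_left (hM s hs) hA.le)
  obtain ⟨B1, hB1⟩ := isCompact_Icc.exists_bound_of_continuousOn hg1
  obtain ⟨B2, hB2⟩ := isCompact_Icc.exists_bound_of_continuousOn hg2
  have hB10 : 0 ≤ B1 := le_trans (norm_nonneg _) (hB1 t0 ⟨le_refl _, htT.le⟩)
  have hB20 : 0 ≤ B2 := le_trans (norm_nonneg _) (hB2 t0 ⟨le_refl _, htT.le⟩)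
  set c : ℕ → ℝ := fun i => genBinom γ i * θ ^ i /
      (b * (1 - θ) ^ ((i : ℝ) - 1) * Real.Gamma ((i : ℝ) * θ + 1 - μ)) with hcdef
  set u : ℕ → ℝ := fun i => |genBinom γ i| * θ ^ i * (T - t0) ^ ((i : ℝ) * θ + 1 - μ) /
      ((1 - θ) ^ ((i : ℝ) - 1) * Real.Gamma ((i : ℝ) * θ + 2 - μ)) with hudef
  have hu_sum : Summable u :=
    summable_majorant θ μ γ (T - t0) hθ0 hθ1 hμ0 hμ1 (by linarith)
  have hsubI : Set.Icc t0 t ⊆ Set.Icc t0 T := Set.Icc_subset_Icc_right htT'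
  -- master bound
  have master : ∀ p : ℝ → ℝ, ContinuousOn p (Set.Icc t0 T) → ∀ B : ℝ, 0 ≤ B →
      (∀ s ∈ Set.Icc t0 T, |p s| ≤ B) → ∀ i : ℕ,
      |c i * ∫ s in t0..t, (t - s) ^ ((i:ℝ) * θ - μ) * p s| ≤ (B / b) * u i := by
    intro p hp B hB0 hB i
    have hiθ : (0:ℝ) ≤ (i:ℝ) * θ := by positivity
    have ha : -1 < (i:ℝ) * θ - μ := by linarith
    have hy : (0:ℝ) < (i:ℝ) * θ + 1 - μ := by linarith
    have hΓ1 : 0 < Real.Gamma ((i:ℝ) * θ + 1 - μ) := Real.Gamma_pos_of_pos hy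
    have hrp : (0:ℝ) < (1 - θ) ^ ((i:ℝ) - 1) := Real.rpow_pos_of_pos h1θ _
    have key := abs_integral_rpow_mul_le t0 t ((i:ℝ)*θ - μ) B ht0 ha p (hp.mono hsubI)
      (fun s hs => hB s (hsubI hs))
    have hci : c i = genBinom γ i * θ ^ i /
        (b * (1 - θ) ^ ((i : ℝ) - 1) * Real.Gamma ((i : ℝ) * θ + 1 - μ)) := rfl
    have hden : (0:ℝ) < b * (1 - θ) ^ ((i : ℝ) - 1) * Real.Gamma ((i : ℝ) * θ + 1 - μ) :=
      mul_pos (mul_pos hb hrp) hΓ1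
    have hcabs : |c i| = |genBinom γ i| * θ ^ i /
        (b * (1 - θ) ^ ((i : ℝ) - 1) * Real.Gamma ((i : ℝ) * θ + 1 - μ)) := by
      rw [hci, abs_div, abs_mul, abs_of_nonneg (pow_nonneg hθ0.le i), abs_of_pos hden]
    have hGam : Real.Gamma ((i:ℝ) * θ + 2 - μ) =
        ((i:ℝ) * θ + 1 - μ) * Real.Gamma ((i:ℝ) * θ + 1 - μ) := by
      rw [show (i:ℝ) * θ + 2 - μ = ((i:ℝ) * θ + 1 - μ) + 1 by ring,
        Real.Gamma_add_one (ne_of_gt hy)]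
    have hui : u i = |genBinom γ i| * θ ^ i * (T - t0) ^ ((i : ℝ) * θ + 1 - μ) /
        ((1 - θ) ^ ((i : ℝ) - 1) * Real.Gamma ((i : ℝ) * θ + 2 - μ)) := rfl
    have heq : (B / b) * u i =
        |c i| * (B * ((T - t0) ^ ((i:ℝ) * θ - μ + 1) / ((i:ℝ) * θ - μ + 1))) := by
      rw [hui, hcabs, hGam, show (i:ℝ) * θ - μ + 1 = (i:ℝ) * θ + 1 - μ by ring]
      field_simp
    calc |c i * ∫ s in t0..t, (t - s) ^ ((i:ℝ) * θ - μ) * p s|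
        = |c i| * |∫ s in t0..t, (t - s) ^ ((i:ℝ) * θ - μ) * p s| := abs_mul _ _
      _ ≤ |c i| * (B * ((t - t0) ^ ((i:ℝ) * θ - μ + 1) / ((i:ℝ) * θ - μ + 1))) :=
          mul_le_mul_of_nonneg_left key (abs_nonneg _)
      _ ≤ |c i| * (B * ((T - t0) ^ ((i:ℝ) * θ - μ + 1) / ((i:ℝ) * θ - μ + 1))) := by
          gcongr <;> linarith
      _ = (B / b) * u i := heq.symm
  -- integrability
  have hint1 : ∀ i : ℕ, IntervalIntegrable
      (fun s => (t - s) ^ ((i:ℝ) * θ - μ) * f s (x1 s)) volume t0 t := by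
    intro i
    have hiθ : (0:ℝ) ≤ (i:ℝ) * θ := by positivity
    exact intInt_rpow_mul t0 t _ (by linarith) _
      ((hg1.mono hsubI).mono (by rw [uIcc_of_le ht0]))
  have hint2 : ∀ i : ℕ, IntervalIntegrable
      (fun s => (t - s) ^ ((i:ℝ) * θ - μ) * f s (x2 s)) volume t0 t := by
    intro i
    have hiθ : (0:ℝ) ≤ (i:ℝ) * θ := by positivity
    exact intInt_rpow_mul t0 t _ (by linarith) _
      ((hg2.mono hsubI).mono (by rw [uIcc_of_le ht0]))
  -- summability of the two series
  have habs1 : ∀ i : ℕ,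
      |c i * ∫ s in t0..t, (t - s) ^ ((i:ℝ) * θ - μ) * f s (x1 s)| ≤ (B1 / b) * u i :=
    master _ hg1 B1 hB10 (fun s hs => by rw [← Real.norm_eq_abs]; exact hB1 s hs)
  have habs2 : ∀ i : ℕ,
      |c i * ∫ s in t0..t, (t - s) ^ ((i:ℝ) * θ - μ) * f s (x2 s)| ≤ (B2 / b) * u i :=
    master _ hg2 B2 hB20 (fun s hs => by rw [← Real.norm_eq_abs]; exact hB2 s hs)
  have hsum1 : Summable (fun i : ℕ =>
      c i * ∫ s in t0..t, (t - s) ^ ((i:ℝ) * θ - μ) * f s (x1 s)) :=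
    (Summable.of_nonneg_of_le (fun i => abs_nonneg _) habs1 (hu_sum.mul_left _)).of_abs
  have hsum2 : Summable (fun i : ℕ =>
      c i * ∫ s in t0..t, (t - s) ^ ((i:ℝ) * θ - μ) * f s (x2 s)) :=
    (Summable.of_nonneg_of_le (fun i => abs_nonneg _) habs2 (hu_sum.mul_left _)).of_abs
  have hmg : ∀ i : ℕ,
      |c i * ∫ s in t0..t, (t - s) ^ ((i:ℝ) * θ - μ) * g s| ≤ ((A * M) / b) * u i :=
    master g hgd (A * M) (by positivity) hgM
  have hsabs : Summable (fun i : ℕ =>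
      |c i * ∫ s in t0..t, (t - s) ^ ((i:ℝ) * θ - μ) * g s|) :=
    Summable.of_nonneg_of_le (fun i => abs_nonneg _) hmg (hu_sum.mul_left _)
  -- the difference of the two tsums
  have hA1 : ABIntegral t0 b θ μ γ (fun s => f s (x1 s)) t =
      ∑' i : ℕ, c i * ∫ s in t0..t, (t - s) ^ ((i:ℝ) * θ - μ) * f s (x1 s) := rfl
  have hA2 : ABIntegral t0 b θ μ γ (fun s => f s (x2 s)) t =
      ∑' i : ℕ, c i * ∫ s in t0..t, (t - s) ^ ((i:ℝ) * θ - μ) * f s (x2 s) := rfl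
  have hterm : ∀ i : ℕ,
      (c i * ∫ s in t0..t, (t - s) ^ ((i:ℝ) * θ - μ) * f s (x1 s)) -
      (c i * ∫ s in t0..t, (t - s) ^ ((i:ℝ) * θ - μ) * f s (x2 s)) =
      c i * ∫ s in t0..t, (t - s) ^ ((i:ℝ) * θ - μ) * g s := by
    intro i
    rw [← mul_sub, ← intervalIntegral.integral_sub (hint1 i) (hint2 i)]
    congr 1
    congr 1
    funext s
    rw [hgdef]
    ring
  have hstep : (x0 + ABIntegral t0 b θ μ γ (fun s => f s (x1 s)) t) -
      (x0 + ABIntegral t0 b θ μ γ (fun s => f s (x2 s)) t) =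
      ∑' i : ℕ, c i * ∫ s in t0..t, (t - s) ^ ((i:ℝ) * θ - μ) * g s := by
    rw [add_sub_add_left_eq_sub, hA1, hA2, ← Summable.tsum_sub hsum1 hsum2]
    exact tsum_congr hterm
  rw [hstep]
  calc |∑' i : ℕ, c i * ∫ s in t0..t, (t - s) ^ ((i:ℝ) * θ - μ) * g s|
      ≤ ∑' i : ℕ, |c i * ∫ s in t0..t, (t - s) ^ ((i:ℝ) * θ - μ) * g s| := by
        have hsabs' : Summable (fun i : ℕ =>
            ‖c i * ∫ s in t0..t, (t - s) ^ ((i:ℝ) * θ - μ) * g s‖) := by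
          simpa only [Real.norm_eq_abs] using hsabs
        have h := norm_tsum_le_tsum_norm hsabs'
        simpa only [Real.norm_eq_abs] using h
    _ ≤ ∑' i : ℕ, ((A * M) / b) * u i := Summable.tsum_le_tsum hmg hsabs (hu_sum.mul_left _)
    _ = ((A * M) / b) * ∑' i, u i := tsum_mul_left
    _ = C1const t0 T b θ μ γ A * M := by
        have hC1 : C1const t0 T b θ μ γ A = (A / b) * ∑' i, u i := rfl
        rw [hC1]
        ring
end

section
/- Let t0 < T, θ ∈ (0,1), μ > 0, γ ∈ ℝ, b > 0, λ = −θ/(1−θ), and let f : [t0,T] → ℝ be continuously differentiable. Then for every t ∈ (t0,T], (D^{θ,μ,γ}f)(t) = (R^{θ,μ,γ}f)(t) − (b/(1−θ)) f(t0) E_{θ,μ}^{γ}(λ, t − t0), i.e., the generalized ABC and ABR fractional derivatives of f differ by the Mittag-Leffler kernel weighted by the initial value f(t0). -/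
open Real MeasureTheory Set

noncomputable def mlCoef (θ μ γ lam : ℝ) (k : ℕ) : ℝ :=
  lam ^ k * risingFac γ k / (Real.Gamma ((k : ℝ) * θ + μ) * (Nat.factorial k : ℝ))

-- log-convexity lower bound for Gamma ratio
lemma gamma_ratio_lb {θ x : ℝ} (hθ0 : 0 < θ) (hθ1 : θ < 1) (hx : 0 < x) :
    x * Real.Gamma x ≤ Real.Gamma (x + θ) * (x + θ) ^ (1 - θ) := by
  have hxθ : (0:ℝ) < x + θ := by linarith
  have hc := Real.convexOn_log_Gamma
  have h := hc.2 (mem_Ioi.2 hxθ) (mem_Ioi.2 (by linarith : (0:ℝ) < x + θ + 1))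
      (le_of_lt hθ0) (by linarith : (0:ℝ) ≤ 1 - θ) (by ring)
  have hcomb : θ • (x + θ) + (1 - θ) • (x + θ + 1) = x + 1 := by
    simp [smul_eq_mul]; ring
  rw [hcomb] at h
  simp only [Function.comp_apply, smul_eq_mul] at h
  have hG1 : Real.Gamma (x + θ + 1) = (x + θ) * Real.Gamma (x + θ) :=
    Real.Gamma_add_one (ne_of_gt hxθ)
  have hGpos : 0 < Real.Gamma (x + θ) := Real.Gamma_pos_of_pos hxθ
  have hGx1 : Real.Gamma (x + 1) = x * Real.Gamma x := Real.Gamma_add_one (ne_of_gt hx)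
  rw [hG1, hGx1, Real.log_mul (ne_of_gt hxθ) (ne_of_gt hGpos)] at h
  have h2 : Real.log (x * Real.Gamma x) ≤ Real.log (Real.Gamma (x + θ)) + (1 - θ) * Real.log (x + θ) := by
    nlinarith [h]
  have hx' : 0 < x * Real.Gamma x := mul_pos hx (Real.Gamma_pos_of_pos hx)
  calc x * Real.Gamma x = Real.exp (Real.log (x * Real.Gamma x)) := (Real.exp_log hx').symm
    _ ≤ Real.exp (Real.log (Real.Gamma (x + θ)) + (1 - θ) * Real.log (x + θ)) := Real.exp_le_exp.2 h2
    _ = Real.Gamma (x + θ) * (x + θ) ^ (1 - θ) := by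
        rw [Real.exp_add, Real.exp_log hGpos, Real.rpow_def_of_pos hxθ]
        ring_nf

lemma summable_D {θ μ : ℝ} (hθ0 : 0 < θ) (hθ1 : θ < 1) (hμ : 0 < μ) (D : ℝ) (hD : 0 ≤ D) :
    Summable (fun k : ℕ => D ^ k / Real.Gamma ((k : ℝ) * θ + μ)) := by
  -- ratio test
  have hxpos : ∀ k : ℕ, (0:ℝ) < (k : ℝ) * θ + μ := fun k => by positivity
  have hGpos : ∀ k : ℕ, 0 < Real.Gamma ((k : ℝ) * θ + μ) := fun k => Real.Gamma_pos_of_pos (hxpos k)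
  apply summable_of_ratio_norm_eventually_le (r := 1/2) (by norm_num)
  -- eventually: x_k ≥ θ and x_k ^ θ ≥ 2 * (2*D+1)
  have htend : Filter.Tendsto (fun k : ℕ => ((k : ℝ) * θ + μ) ^ θ) Filter.atTop Filter.atTop := by
    apply (tendsto_rpow_atTop hθ0).comp
    apply Filter.tendsto_atTop_add_const_right
    exact (tendsto_natCast_atTop_atTop (R := ℝ)).atTop_mul_const hθ0
  have htend2 : Filter.Tendsto (fun k : ℕ => ((k : ℝ) * θ + μ)) Filter.atTop Filter.atTop := by
    apply Filter.tendsto_atTop_add_const_right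
    exact (tendsto_natCast_atTop_atTop (R := ℝ)).atTop_mul_const hθ0
  filter_upwards [htend.eventually_ge_atTop (2 * (2 * D + 1)), htend2.eventually_ge_atTop θ] with k hk1 hk2
  set x := (k : ℝ) * θ + μ with hxdef
  have hx : 0 < x := hxpos k
  have hxθ : 0 < x + θ := by linarith
  -- Gamma ((k+1)θ+μ) = Gamma (x + θ)
  have hxe : ((k : ℕ) + 1 : ℝ) * θ + μ = x + θ := by push_cast; ring
  have hkey : x * Real.Gamma x ≤ Real.Gamma (x + θ) * (x + θ) ^ (1 - θ) := gamma_ratio_lb hθ0 hθ1 hx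
  -- (x+θ)^(1-θ) ≤ (2x)^(1-θ) ≤ 2 * x^(1-θ)
  have h2x : (x + θ) ^ (1 - θ) ≤ 2 * x ^ (1 - θ) := by
    calc (x + θ) ^ (1-θ) ≤ (2*x) ^ (1-θ) := by
          apply Real.rpow_le_rpow (le_of_lt hxθ) (by linarith) (by linarith)
      _ = 2 ^ (1-θ) * x ^ (1-θ) := Real.mul_rpow (by norm_num) (le_of_lt hx)
      _ ≤ 2 * x ^ (1-θ) := by
          have : (2:ℝ) ^ (1-θ) ≤ 2 ^ (1:ℝ) := Real.rpow_le_rpow_of_exponent_le (by norm_num) (by linarith)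
          simp only [Real.rpow_one] at this
          nlinarith [Real.rpow_nonneg (le_of_lt hx) (1-θ)]
  -- so Gamma(x+θ) ≥ x * Gamma x / (2 x^{1-θ}) = Gamma x * x^θ / 2
  have hxsplit : x = x ^ θ * x ^ (1 - θ) := by
    rw [← Real.rpow_add hx]; simp
  have hrp : (0:ℝ) < x ^ (1-θ) := Real.rpow_pos_of_pos hx _
  have hrpθ : (0:ℝ) < x ^ θ := Real.rpow_pos_of_pos hx _
  have hGr : Real.Gamma x * x ^ θ ≤ Real.Gamma (x + θ) * 2 := by
    have h3 : x * Real.Gamma x ≤ Real.Gamma (x + θ) * (2 * x ^ (1-θ)) := by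
      calc x * Real.Gamma x ≤ Real.Gamma (x + θ) * (x + θ) ^ (1 - θ) := hkey
        _ ≤ Real.Gamma (x + θ) * (2 * x ^ (1-θ)) := by
            apply mul_le_mul_of_nonneg_left h2x (le_of_lt (Real.Gamma_pos_of_pos hxθ))
    have e : Real.Gamma x * x ^ θ * x ^ (1-θ) = x * Real.Gamma x := by
      rw [mul_assoc, ← hxsplit]; ring
    have h4 : Real.Gamma x * x ^ θ * x ^ (1-θ) ≤ Real.Gamma (x+θ) * 2 * x ^ (1-θ) := by
      rw [e, mul_assoc]; exact h3
    exact (mul_le_mul_iff_of_pos_right hrp).1 h4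
  -- conclude ratio bound
  have hGx : 0 < Real.Gamma x := Real.Gamma_pos_of_pos hx
  have hGxθ : 0 < Real.Gamma (x + θ) := Real.Gamma_pos_of_pos hxθ
  have hstep : D * Real.Gamma x ≤ 1/2 * Real.Gamma (x + θ) := by
    have h4 : Real.Gamma x * (2 * (2*D+1)) ≤ Real.Gamma x * x ^ θ :=
      mul_le_mul_of_nonneg_left hk1 (le_of_lt hGx)
    nlinarith [hGx.le]
  have hDk : (0:ℝ) ≤ D ^ k := pow_nonneg hD _
  have hcast : ((k+1:ℕ):ℝ) * θ + μ = x + θ := by push_cast; ring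
  rw [Real.norm_eq_abs, Real.norm_eq_abs, abs_div, abs_div, abs_of_nonneg (pow_nonneg hD _), abs_of_nonneg (pow_nonneg hD _), hcast, abs_of_pos hGxθ, abs_of_pos hGx]
  rw [div_le_iff₀ hGxθ]
  have e2 : 1/2 * (D^k/Real.Gamma x) * Real.Gamma (x+θ) = D^k * (1/2 * Real.Gamma (x+θ)) / Real.Gamma x := by ring
  rw [e2, le_div_iff₀ hGx]
  calc D^(k+1) * Real.Gamma x = D^k * (D * Real.Gamma x) := by ring
    _ ≤ D^k * (1/2 * Real.Gamma (x+θ)) := mul_le_mul_of_nonneg_left hstep hDk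




lemma risingFac_abs_le (γ : ℝ) (k : ℕ) :
    |risingFac γ k| ≤ (1 + |γ|) ^ k * (Nat.factorial k : ℝ) := by
  rw [risingFac, Finset.abs_prod]
  have h1 : ∀ j ∈ Finset.range k, |γ + (j:ℝ)| ≤ (1 + |γ|) * ((j:ℝ) + 1) := by
    intro j _
    have := abs_add_le γ (j:ℝ)
    have hj : |(j:ℝ)| = (j:ℝ) := abs_of_nonneg (Nat.cast_nonneg j)
    have h2 : (0:ℝ) ≤ |γ| := abs_nonneg γ
    have h3 : (0:ℝ) ≤ (j:ℝ) := Nat.cast_nonneg j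
    nlinarith [this]
  calc (∏ j ∈ Finset.range k, |γ + (j:ℝ)|)
      ≤ ∏ j ∈ Finset.range k, (1 + |γ|) * ((j:ℝ) + 1) := by
        apply Finset.prod_le_prod (fun j _ => abs_nonneg _) h1
    _ = (1 + |γ|) ^ k * ∏ j ∈ Finset.range k, ((j:ℝ) + 1) := by
        rw [Finset.prod_mul_distrib, Finset.prod_const, Finset.card_range]
    _ = (1 + |γ|) ^ k * (Nat.factorial k : ℝ) := by
        congr 1
        rw_mod_cast [Finset.prod_range_add_one_eq_factorial]

lemma summable_coef {θ μ : ℝ} (hθ0 : 0 < θ) (hθ1 : θ < 1) (hμ : 0 < μ) (γ lam : ℝ)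
    (R : ℝ) (hR : 0 ≤ R) :
    Summable (fun k : ℕ => |mlCoef θ μ γ lam k| * R ^ k) := by
  set D := |lam| * (1 + |γ|) * R with hD
  have hD0 : 0 ≤ D := by positivity
  refine Summable.of_nonneg_of_le (fun k => by positivity) (fun k => ?_)
    (summable_D hθ0 hθ1 hμ D hD0)
  have hGpos : 0 < Real.Gamma ((k:ℝ) * θ + μ) := Real.Gamma_pos_of_pos (by positivity)
  have hfac : (0:ℝ) < (Nat.factorial k : ℝ) := by exact_mod_cast Nat.factorial_pos k
  rw [mlCoef, abs_div, abs_mul, abs_pow, abs_mul, abs_of_pos hGpos, abs_of_pos hfac]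
  have h2 : |lam|^k * |risingFac γ k| / (Real.Gamma ((k:ℝ)*θ+μ) * (Nat.factorial k:ℝ)) * R^k
      = (|lam|^k * |risingFac γ k| * R^k) / (Real.Gamma ((k:ℝ)*θ+μ) * (Nat.factorial k:ℝ)) := by
    ring
  rw [h2, div_le_div_iff₀ (by positivity) hGpos]
  have key : |lam| ^ k * |risingFac γ k| * R ^ k ≤ D ^ k * (Nat.factorial k : ℝ) := by
    calc |lam| ^ k * |risingFac γ k| * R ^ k
        ≤ |lam| ^ k * ((1 + |γ|) ^ k * (Nat.factorial k : ℝ)) * R ^ k := by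
          apply mul_le_mul_of_nonneg_right _ (pow_nonneg hR k)
          exact mul_le_mul_of_nonneg_left (risingFac_abs_le γ k) (pow_nonneg (abs_nonneg _) k)
      _ = D ^ k * (Nat.factorial k : ℝ) := by
          rw [hD, mul_pow, mul_pow]; ring
  calc |lam| ^ k * |risingFac γ k| * R ^ k * Real.Gamma ((k:ℝ)*θ+μ)
      ≤ D ^ k * (Nat.factorial k:ℝ) * Real.Gamma ((k:ℝ)*θ+μ) :=
        mul_le_mul_of_nonneg_right key hGpos.le
    _ = D ^ k * (Real.Gamma ((k:ℝ)*θ+μ) * (Nat.factorial k:ℝ)) := by ring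

noncomputable def mlP (θ μ γ lam : ℝ) (x : ℝ) : ℝ := ∑' k : ℕ, mlCoef θ μ γ lam k * x ^ k

lemma continuous_mlP {θ μ : ℝ} (hθ0 : 0 < θ) (hθ1 : θ < 1) (hμ : 0 < μ) (γ lam : ℝ) :
    Continuous (mlP θ μ γ lam) := by
  rw [continuous_iff_continuousAt]
  intro x
  have hR : (0:ℝ) ≤ |x| + 1 := by positivity
  have hcont : ContinuousOn (mlP θ μ γ lam) (Metric.ball x 1) := by
    apply continuousOn_tsum (u := fun k => |mlCoef θ μ γ lam k| * (|x|+1) ^ k)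
    · intro k; exact (continuous_const.mul (continuous_pow k)).continuousOn
    · exact summable_coef hθ0 hθ1 hμ γ lam _ hR
    · intro k y hy
      rw [Real.norm_eq_abs, abs_mul, abs_pow]
      apply mul_le_mul_of_nonneg_left _ (abs_nonneg _)
      apply pow_le_pow_left₀ (abs_nonneg _)
      have := mem_ball_iff_norm.1 hy
      rw [Real.norm_eq_abs] at this
      calc |y| = |x + (y - x)| := by ring_nf
        _ ≤ |x| + |y - x| := abs_add_le _ _
        _ ≤ |x| + 1 := by linarith
  exact hcont.continuousAt (Metric.ball_mem_nhds x one_pos)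






lemma ml_eq {θ μ : ℝ} (hθ0 : 0 < θ) (γ lam : ℝ) {z : ℝ} (hz : 0 < z) :
    mittagLeffler θ μ γ lam z = mlP θ μ γ lam (z ^ θ) * z ^ (μ - 1) := by
  rw [mittagLeffler, mlP, ← tsum_mul_right]
  congr 1; funext k
  have h1 : z ^ ((k : ℝ) * θ + μ - 1) = (z ^ θ) ^ k * z ^ (μ - 1) := by
    rw [show (k : ℝ) * θ + μ - 1 = (k : ℝ) * θ + (μ - 1) by ring, Real.rpow_add hz]
    congr 1
    rw [mul_comm, Real.rpow_mul hz.le, Real.rpow_natCast]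
  rw [mlCoef, h1]; ring

lemma ml_contOn {θ μ : ℝ} (hθ0 : 0 < θ) (hθ1 : θ < 1) (hμ : 0 < μ) (γ lam : ℝ) :
    ContinuousOn (mittagLeffler θ μ γ lam) (Ioi 0) := by
  have h : ContinuousOn (fun z : ℝ => mlP θ μ γ lam (z ^ θ) * z ^ (μ - 1)) (Ioi 0) := by
    apply ContinuousOn.mul
    · exact (continuous_mlP hθ0 hθ1 hμ γ lam).comp_continuousOn
        (fun z hz => (Real.continuousAt_rpow_const z θ (Or.inl (ne_of_gt hz))).continuousWithinAt)
    · exact fun z hz => (Real.continuousAt_rpow_const z (μ-1) (Or.inl (ne_of_gt hz))).continuousWithinAt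
  exact h.congr (fun z hz => ml_eq hθ0 γ lam hz)

lemma ml_bound {θ μ : ℝ} (hθ0 : 0 < θ) (hθ1 : θ < 1) (hμ : 0 < μ) (γ lam : ℝ)
    (L : ℝ) (hL : 0 < L) :
    ∃ K : ℝ, 0 ≤ K ∧ ∀ z : ℝ, 0 < z → z ≤ L →
      |mittagLeffler θ μ γ lam z| ≤ K * z ^ (μ - 1) := by
  set R := L ^ θ with hR
  have hR0 : 0 ≤ R := Real.rpow_nonneg hL.le θ
  refine ⟨∑' k : ℕ, |mlCoef θ μ γ lam k| * R ^ k,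
    tsum_nonneg (fun k => by positivity), fun z hz hzL => ?_⟩
  rw [ml_eq hθ0 γ lam hz, abs_mul, abs_of_nonneg (Real.rpow_nonneg hz.le _)]
  apply mul_le_mul_of_nonneg_right _ (Real.rpow_nonneg hz.le _)
  rw [mlP]
  have hle : ∀ k : ℕ, |mlCoef θ μ γ lam k * (z ^ θ) ^ k| ≤ |mlCoef θ μ γ lam k| * R ^ k := by
    intro k
    rw [abs_mul, abs_pow]
    apply mul_le_mul_of_nonneg_left _ (abs_nonneg _)
    apply pow_le_pow_left₀ (abs_nonneg _)
    rw [abs_of_nonneg (Real.rpow_nonneg hz.le θ)]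
    exact Real.rpow_le_rpow hz.le hzL hθ0.le
  have hsum : Summable (fun k : ℕ => |mlCoef θ μ γ lam k * (z ^ θ) ^ k|) :=
    Summable.of_nonneg_of_le (fun k => abs_nonneg _) hle (summable_coef hθ0 hθ1 hμ γ lam R hR0)
  calc |∑' k : ℕ, mlCoef θ μ γ lam k * (z ^ θ) ^ k|
      ≤ ∑' k : ℕ, |mlCoef θ μ γ lam k * (z ^ θ) ^ k| := by
        have hsum' : Summable (fun k : ℕ => ‖mlCoef θ μ γ lam k * (z ^ θ) ^ k‖) := hsum
        have h := norm_tsum_le_tsum_norm hsum'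
        exact h
    _ ≤ ∑' k : ℕ, |mlCoef θ μ γ lam k| * R ^ k :=
        Summable.tsum_le_tsum hle hsum (summable_coef hθ0 hθ1 hμ γ lam R hR0)

open intervalIntegral

section Integration
variable {t0 T1 μ K : ℝ} {E : ℝ → ℝ}

lemma EInt' (htT : t0 < T1) (hμ : 0 < μ) (hK : 0 ≤ K)
    (hEc : ContinuousOn E (Ioi 0))
    (hEb : ∀ z, 0 < z → z ≤ T1 - t0 → |E z| ≤ K * z ^ (μ - 1)) :
    ∀ z, 0 ≤ z → z ≤ T1 - t0 → IntervalIntegrable E volume 0 z := by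
  intro z hz0 hzL
  rw [intervalIntegrable_iff_integrableOn_Ioc_of_le hz0]
  have hrp : IntegrableOn (fun x : ℝ => K * x ^ (μ - 1)) (Ioc 0 z) volume := by
    apply Integrable.const_mul
    exact (intervalIntegral.intervalIntegrable_rpow' (by linarith : (-1:ℝ) < μ - 1)).1
  apply Integrable.mono' hrp
  · exact (hEc.mono Ioc_subset_Ioi_self).aestronglyMeasurable measurableSet_Ioc
  · rw [ae_restrict_iff' measurableSet_Ioc]
    exact ae_of_all _ fun x hx => by
      rw [Real.norm_eq_abs]; exact hEb x hx.1 (hx.2.trans hzL)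

lemma kernelInt (htT : t0 < T1) (hμ : 0 < μ) (hK : 0 ≤ K)
    (hEc : ContinuousOn E (Ioi 0))
    (hEb : ∀ z, 0 < z → z ≤ T1 - t0 → |E z| ≤ K * z ^ (μ - 1))
    {u : ℝ} (hu : u ∈ Icc t0 T1) {ψ : ℝ → ℝ} (hψ : Continuous ψ) :
    IntervalIntegrable (fun s => E (u - s) * ψ s) volume t0 u := by
  obtain ⟨M, hM⟩ := (isCompact_Icc (a := t0) (b := T1)).exists_bound_of_continuousOn
    hψ.continuousOn
  have hM0 : 0 ≤ M := le_trans (norm_nonneg (ψ t0)) (hM t0 ⟨le_rfl, hu.1.trans hu.2⟩)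
  rw [intervalIntegrable_iff_integrableOn_Ioc_of_le hu.1]
  have hcongr : Ioo t0 u =ᵐ[volume] Ioc t0 u := Ioo_ae_eq_Ioc
  rw [IntegrableOn, ← Measure.restrict_congr_set hcongr]
  have hrp : IntegrableOn (fun s : ℝ => K * M * (u - s) ^ (μ - 1)) (Ioo t0 u) volume := by
    apply Integrable.const_mul
    have h2 := (intervalIntegral.intervalIntegrable_rpow'
      (by linarith : (-1:ℝ) < μ - 1) (a := 0) (b := u - t0)).comp_sub_left u
    simp only [sub_sub_cancel, sub_zero] at h2
    exact ((h2.symm.1).mono_set Ioo_subset_Ioc_self)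
  apply Integrable.mono' hrp
  · apply ContinuousOn.aestronglyMeasurable _ measurableSet_Ioo
    apply ContinuousOn.mul _ hψ.continuousOn
    apply hEc.comp (continuous_const.sub continuous_id).continuousOn
    intro s hs
    exact mem_Ioi.2 (by show (0:ℝ) < u - s; linarith [hs.2])
  · rw [ae_restrict_iff' measurableSet_Ioo]
    refine ae_of_all _ fun s hs => ?_
    rw [Real.norm_eq_abs, abs_mul]
    have h1 : |E (u - s)| ≤ K * (u - s) ^ (μ - 1) :=
      hEb (u - s) (by linarith [hs.2]) (by linarith [hs.1, hu.2])
    have h2 : |ψ s| ≤ M := by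
      have := hM s ⟨hs.1.le, hs.2.le.trans hu.2⟩
      rwa [Real.norm_eq_abs] at this
    calc |E (u - s)| * |ψ s| ≤ (K * (u - s) ^ (μ - 1)) * M := by
          exact mul_le_mul h1 h2 (abs_nonneg _)
            (mul_nonneg hK (Real.rpow_nonneg (by linarith [hs.2]) _))
      _ = K * M * (u - s) ^ (μ - 1) := by ring


noncomputable def Hfun (E : ℝ → ℝ) (z : ℝ) : ℝ := ∫ v in (0:ℝ)..z, E v

lemma Hcont (htT : t0 < T1) (hμ : 0 < μ) (hK : 0 ≤ K)
    (hEc : ContinuousOn E (Ioi 0))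
    (hEb : ∀ z, 0 < z → z ≤ T1 - t0 → |E z| ≤ K * z ^ (μ - 1)) :
    ContinuousOn (Hfun E) (Icc 0 (T1 - t0)) := by
  have hL : (0:ℝ) ≤ T1 - t0 := by linarith
  have h1 := EInt' htT hμ hK hEc hEb (T1 - t0) hL le_rfl
  rw [intervalIntegrable_iff_integrableOn_Ioc_of_le hL] at h1
  have h2 : IntegrableOn E (Icc 0 (T1 - t0)) volume := by
    rw [IntegrableOn, ← Measure.restrict_congr_set Ioc_ae_eq_Icc]
    exact h1
  have := continuousOn_primitive_interval (a := 0) (b := T1 - t0) (f := E) (μ := volume)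
    (by rwa [uIcc_of_le hL])
  rwa [uIcc_of_le hL] at this

lemma Hderiv (htT : t0 < T1) (hμ : 0 < μ) (hK : 0 ≤ K)
    (hEc : ContinuousOn E (Ioi 0))
    (hEb : ∀ z, 0 < z → z ≤ T1 - t0 → |E z| ≤ K * z ^ (μ - 1)) :
    ∀ z, 0 < z → z ≤ T1 - t0 → HasDerivAt (Hfun E) (E z) z := by
  intro z hz hzL
  exact integral_hasDerivAt_right (EInt' htT hμ hK hEc hEb z hz.le hzL)
    ⟨Ioi 0, Ioi_mem_nhds hz, hEc.aestronglyMeasurable measurableSet_Ioi⟩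
    (hEc.continuousAt (Ioi_mem_nhds hz))

lemma IBP (htT : t0 < T1) (hμ : 0 < μ) (hK : 0 ≤ K)
    (hEc : ContinuousOn E (Ioi 0))
    (hEb : ∀ z, 0 < z → z ≤ T1 - t0 → |E z| ≤ K * z ^ (μ - 1))
    {f : ℝ → ℝ} (hf : ContDiff ℝ 1 f) :
    ∀ u ∈ Icc t0 T1, ∫ s in t0..u, E (u - s) * f s
      = f t0 * Hfun E (u - t0) + ∫ s in t0..u, Hfun E (u - s) * deriv f s := by
  intro u hu
  rcases eq_or_lt_of_le hu.1 with heq | hlt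
  · rw [← heq]
    simp [Hfun, intervalIntegral.integral_same]
  have hfc : Continuous f := hf.continuous
  have hf'c : Continuous (deriv f) := hf.continuous_deriv le_rfl
  have hfd : ∀ s : ℝ, HasDerivAt f (deriv f s) s :=
    fun s => (hf.differentiable one_ne_zero).differentiableAt.hasDerivAt
  -- integrabilities
  have hI1 : IntervalIntegrable (fun s => E (u - s) * f s) volume t0 u :=
    kernelInt htT hμ hK hEc hEb hu hfc
  have hHmaps : ∀ s ∈ Icc t0 u, u - s ∈ Icc 0 (T1 - t0) := fun s hs =>
    ⟨by linarith [hs.2], by linarith [hs.1, hu.2]⟩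
  have hHcomp : ContinuousOn (fun s => Hfun E (u - s)) (Icc t0 u) :=
    (Hcont htT hμ hK hEc hEb).comp (continuous_const.sub continuous_id).continuousOn hHmaps
  have hI2 : IntervalIntegrable (fun s => Hfun E (u - s) * deriv f s) volume t0 u := by
    apply ContinuousOn.intervalIntegrable
    rw [uIcc_of_le hu.1]
    exact hHcomp.mul hf'c.continuousOn
  -- FTC-2
  have hftc := intervalIntegral.integral_eq_sub_of_hasDerivAt_of_le hu.1
    (f := fun s => Hfun E (u - s) * f s)
    (f' := fun s => -(E (u - s) * f s) + Hfun E (u - s) * deriv f s)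
    (hHcomp.mul hfc.continuousOn)
    (fun s hs => by
      have h1 : HasDerivAt (fun x : ℝ => u - x) (-1) s := (hasDerivAt_id s).const_sub u
      have h2 : HasDerivAt (Hfun E) (E (u - s)) (u - s) :=
        Hderiv htT hμ hK hEc hEb (u - s) (by linarith [hs.2]) (by linarith [hs.1, hu.2])
      have h3 := (h2.comp s h1).mul (hfd s)
      simp only [Function.comp_def] at h3
      exact h3.congr_deriv (by ring))
    (hI1.neg.add hI2)
  have e1 : (∫ y in t0..u, (-(E (u - y) * f y) + Hfun E (u - y) * deriv f y))
      = -(∫ s in t0..u, E (u - s) * f s) + ∫ s in t0..u, Hfun E (u - s) * deriv f s := by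
    have e1' := intervalIntegral.integral_add hI1.neg hI2
    simp only [Pi.neg_apply] at e1'
    rw [intervalIntegral.integral_neg] at e1'
    exact e1'
  have hH0 : Hfun E (0:ℝ) = 0 := intervalIntegral.integral_same
  rw [e1, sub_self, hH0, zero_mul, zero_sub] at hftc
  linarith [hftc]

noncomputable def kfun (E φ : ℝ → ℝ) : ℝ × ℝ → ℝ :=
  Set.indicator {q : ℝ × ℝ | q.1 < q.2} (fun q => E (q.2 - q.1) * φ q.1)

lemma kfun_integrable (htT : t0 < T1) (hμ : 0 < μ) (hK : 0 ≤ K)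
    (hEc : ContinuousOn E (Ioi 0))
    (hEb : ∀ z, 0 < z → z ≤ T1 - t0 → |E z| ≤ K * z ^ (μ - 1))
    {φ : ℝ → ℝ} (hφ : Continuous φ) {u : ℝ} (hu : u ∈ Icc t0 T1) :
    Integrable (kfun E φ)
      ((volume.restrict (Ioc t0 u)).prod (volume.restrict (Ioc t0 u))) := by
  set ν := volume.restrict (Ioc t0 u) with hν
  obtain ⟨M, hM⟩ := (isCompact_Icc (a := t0) (b := T1)).exists_bound_of_continuousOn
    hφ.continuousOn
  have hM0 : 0 ≤ M := le_trans (norm_nonneg (φ t0)) (hM t0 ⟨le_rfl, hu.1.trans hu.2⟩)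
  have hU : MeasurableSet {q : ℝ × ℝ | q.1 < q.2} :=
    (isOpen_lt continuous_fst continuous_snd).measurableSet
  -- AESM of kfun
  have hkm : AEStronglyMeasurable (kfun E φ) (ν.prod ν) := by
    rw [kfun, aestronglyMeasurable_indicator_iff hU]
    apply ContinuousOn.aestronglyMeasurable _ hU
    apply ContinuousOn.mul _ (hφ.comp continuous_fst).continuousOn
    apply hEc.comp (continuous_snd.sub continuous_fst).continuousOn
    intro q hq
    exact mem_Ioi.2 (sub_pos.2 hq)
  -- bound function
  set B : ℝ × ℝ → ℝ :=
    Set.indicator {q : ℝ × ℝ | q.1 < q.2} (fun q => K * M * (q.2 - q.1) ^ (μ - 1)) with hB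
  have hBm : AEStronglyMeasurable B (ν.prod ν) := by
    rw [hB, aestronglyMeasurable_indicator_iff hU]
    apply ContinuousOn.aestronglyMeasurable _ hU
    apply ContinuousOn.mul continuousOn_const
    apply ContinuousOn.rpow_const (continuous_snd.sub continuous_fst).continuousOn
    intro q hq
    exact Or.inl (ne_of_gt (sub_pos.2 hq))
  -- B integrable
  have hBint : Integrable B (ν.prod ν) := by
    rw [MeasureTheory.integrable_prod_iff hBm]
    constructor
    · filter_upwards [ae_restrict_mem measurableSet_Ioc] with s hs
      have hfun : (fun w => B (s, w)) =
          (Ioi s).indicator (fun w => K * M * (w - s) ^ (μ - 1)) := by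
        funext w
        by_cases h : s < w <;>
          simp [hB, Set.indicator_apply, mem_setOf_eq, mem_Ioi, h]
      rw [hfun]
      rw [integrable_indicator_iff measurableSet_Ioi]
      have h2 : IntegrableOn (fun w => K * M * (w - s) ^ (μ - 1)) (Ioc s u) volume := by
        apply Integrable.const_mul
        have h3 := (intervalIntegral.intervalIntegrable_rpow'
          (by linarith : (-1:ℝ) < μ - 1) (a := 0) (b := u - s)).comp_sub_right s
        simp only [zero_add, sub_add_cancel] at h3
        exact (intervalIntegrable_iff_integrableOn_Ioc_of_le hs.2).1 h3
      rw [IntegrableOn, hν, Measure.restrict_restrict measurableSet_Ioi]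
      exact h2.mono_set (fun x hx => ⟨hx.1, hx.2.2⟩)
    · -- integrable of inner-norm integral
      apply Integrable.mono' (integrable_const (K * M * ((u - t0) ^ μ / μ)))
        (hBm.norm.integral_prod_right')
      filter_upwards [ae_restrict_mem measurableSet_Ioc] with s hs
      have hBnn : ∀ w, 0 ≤ B (s, w) := by
        intro w
        rw [hB]
        apply Set.indicator_nonneg
        intro q hq
        have : (0:ℝ) < q.2 - q.1 := sub_pos.2 hq
        positivity
      have hfun : (fun w => B (s, w)) =
          (Ioi s).indicator (fun w => K * M * (w - s) ^ (μ - 1)) := by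
        funext w
        by_cases h : s < w <;>
          simp [hB, Set.indicator_apply, mem_setOf_eq, mem_Ioi, h]
      have hval : ∫ w, ‖B (s, w)‖ ∂ν = ∫ w in s..u, K * M * (w - s) ^ (μ - 1) := by
        have hnorm : (fun w => ‖B (s, w)‖) = fun w => B (s, w) := by
          funext w; exact Real.norm_of_nonneg (hBnn w)
        rw [hnorm, hfun, MeasureTheory.integral_indicator measurableSet_Ioi, hν,
          Measure.restrict_restrict measurableSet_Ioi]
        have hset : Ioi s ∩ Ioc t0 u = Ioc s u := by
          ext x
          simp only [mem_inter_iff, mem_Ioi, mem_Ioc]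
          constructor
          · rintro ⟨h1, _, h3⟩; exact ⟨h1, h3⟩
          · rintro ⟨h1, h2⟩; exact ⟨h1, hs.1.trans h1, h2⟩
        rw [hset, intervalIntegral.integral_of_le hs.2]
      rw [hval, Real.norm_eq_abs]
      have hcomp : ∫ w in s..u, K * M * (w - s) ^ (μ - 1)
          = K * M * ((u - s) ^ μ / μ) := by
        rw [intervalIntegral.integral_const_mul]
        have h5 : (∫ w in s..u, (w - s) ^ (μ - 1)) = ∫ x in (0:ℝ)..(u - s), x ^ (μ - 1) := by
          have := intervalIntegral.integral_comp_sub_right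
            (a := s) (b := u) (fun x => x ^ (μ - 1)) s
          simpa using this
        rw [h5, integral_rpow (Or.inl (by linarith : (-1:ℝ) < μ - 1))]
        rw [Real.zero_rpow (ne_of_gt (by linarith : (0:ℝ) < μ - 1 + 1))]
        rw [show μ - 1 + 1 = μ by ring]
        ring
      rw [hcomp, abs_of_nonneg (mul_nonneg (by positivity)
        (div_nonneg (Real.rpow_nonneg (by linarith [hs.2]) _) hμ.le))]
      apply mul_le_mul_of_nonneg_left _ (by positivity : (0:ℝ) ≤ K * M)
      have h6 : (u - s) ^ μ ≤ (u - t0) ^ μ :=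
        Real.rpow_le_rpow (by linarith [hs.2]) (by linarith [hs.1]) hμ.le
      have h7 : (u - s) ^ μ * μ⁻¹ ≤ (u - t0) ^ μ * μ⁻¹ :=
        mul_le_mul_of_nonneg_right h6 (inv_nonneg.2 hμ.le)
      simpa [div_eq_mul_inv] using h7
  -- conclude
  apply hBint.mono' hkm
  have hsq : ν.prod ν = (volume.prod volume).restrict ((Ioc t0 u) ×ˢ (Ioc t0 u)) := by
    rw [hν, Measure.prod_restrict]
  have hmem : ∀ᵐ p ∂ν.prod ν, p ∈ (Ioc t0 u) ×ˢ (Ioc t0 u) := by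
    rw [hsq]
    exact ae_restrict_mem (measurableSet_Ioc.prod measurableSet_Ioc)
  filter_upwards [hmem] with p hp
  by_cases h : p.1 < p.2
  · have hkv : kfun E φ p = E (p.2 - p.1) * φ p.1 := by
      simp only [kfun]
      exact Set.indicator_of_mem (show p ∈ {q : ℝ × ℝ | q.1 < q.2} from h) _
    have hBv : B p = K * M * (p.2 - p.1) ^ (μ - 1) := by
      rw [hB]
      exact Set.indicator_of_mem (show p ∈ {q : ℝ × ℝ | q.1 < q.2} from h) _
    rw [hkv, hBv, Real.norm_eq_abs, abs_mul]
    have h1 : |E (p.2 - p.1)| ≤ K * (p.2 - p.1) ^ (μ - 1) :=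
      hEb _ (sub_pos.2 h) (by
        have := hp.1.1; have := hp.2.2; have := hu.2; linarith)
    have h2 : |φ p.1| ≤ M := by
      have := hM p.1 ⟨hp.1.1.le, hp.1.2.trans hu.2⟩
      rwa [Real.norm_eq_abs] at this
    calc |E (p.2 - p.1)| * |φ p.1| ≤ (K * (p.2 - p.1) ^ (μ - 1)) * M :=
          mul_le_mul h1 h2 (abs_nonneg _)
            (mul_nonneg hK (Real.rpow_nonneg (by linarith [sub_pos.2 h]) _))
      _ = K * M * (p.2 - p.1) ^ (μ - 1) := by ring
  · have hkv : kfun E φ p = 0 := by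
      simp only [kfun]
      exact Set.indicator_of_notMem (show p ∉ {q : ℝ × ℝ | q.1 < q.2} from h) _
    have hBv : B p = 0 := by
      rw [hB]
      exact Set.indicator_of_notMem (show p ∉ {q : ℝ × ℝ | q.1 < q.2} from h) _
    rw [hkv, hBv]
    simp

lemma kfun_slice_w {φ : ℝ → ℝ} (s : ℝ) :
    (fun w => kfun E φ (s, w)) = (Ioi s).indicator (fun w => E (w - s) * φ s) := by
  funext w
  by_cases h : s < w <;>
    simp [kfun, Set.indicator_apply, mem_setOf_eq, mem_Ioi, h]

lemma kfun_slice_s {φ : ℝ → ℝ} (w : ℝ) :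
    (fun s => kfun E φ (s, w)) = (Iio w).indicator (fun s => E (w - s) * φ s) := by
  funext s
  by_cases h : s < w <;>
    simp [kfun, Set.indicator_apply, mem_setOf_eq, mem_Iio, h]

lemma fubini_step (htT : t0 < T1) (hμ : 0 < μ) (hK : 0 ≤ K)
    (hEc : ContinuousOn E (Ioi 0))
    (hEb : ∀ z, 0 < z → z ≤ T1 - t0 → |E z| ≤ K * z ^ (μ - 1))
    {φ : ℝ → ℝ} (hφ : Continuous φ) {u : ℝ} (hu : u ∈ Icc t0 T1) :
    ∫ s in t0..u, Hfun E (u - s) * φ s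
      = ∫ w in t0..u, (∫ s in t0..w, E (w - s) * φ s) := by
  rcases eq_or_lt_of_le hu.1 with heq | hlt
  · rw [← heq]; simp
  set ν := volume.restrict (Ioc t0 u) with hν
  have claim1 : ∀ s ∈ Ioc t0 u, Hfun E (u - s) * φ s = ∫ w, kfun E φ (s, w) ∂ν := by
    intro s hs
    rw [kfun_slice_w s, MeasureTheory.integral_indicator measurableSet_Ioi, hν,
      Measure.restrict_restrict measurableSet_Ioi]
    have hset : Ioi s ∩ Ioc t0 u = Ioc s u := by
      ext x
      simp only [mem_inter_iff, mem_Ioi, mem_Ioc]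
      exact ⟨fun ⟨h1, _, h3⟩ => ⟨h1, h3⟩, fun ⟨h1, h2⟩ => ⟨h1, hs.1.trans h1, h2⟩⟩
    rw [hset, ← intervalIntegral.integral_of_le hs.2,
      intervalIntegral.integral_mul_const]
    congr 1
    have := intervalIntegral.integral_comp_sub_right (a := s) (b := u) E s
    simpa [Hfun] using this.symm
  have claim2 : ∀ w ∈ Ioc t0 u, (∫ s, kfun E φ (s, w) ∂ν) = ∫ s in t0..w, E (w - s) * φ s := by
    intro w hw
    rw [kfun_slice_s w, MeasureTheory.integral_indicator measurableSet_Iio, hν,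
      Measure.restrict_restrict measurableSet_Iio]
    have hset : Iio w ∩ Ioc t0 u = Ioo t0 w := by
      ext x
      simp only [mem_inter_iff, mem_Iio, mem_Ioc, mem_Ioo]
      exact ⟨fun ⟨h1, h2, _⟩ => ⟨h2, h1⟩, fun ⟨h1, h2⟩ => ⟨h2, h1, (le_of_lt h2).trans hw.2⟩⟩
    rw [hset, Measure.restrict_congr_set Ioo_ae_eq_Ioc,
      ← intervalIntegral.integral_of_le hw.1.le]
  have hswap := MeasureTheory.integral_integral_swap
    (f := fun s w => kfun E φ (s, w)) (μ := ν) (ν := ν)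
    (kfun_integrable htT hμ hK hEc hEb hφ hu)
  calc ∫ s in t0..u, Hfun E (u - s) * φ s
      = ∫ s in Ioc t0 u, Hfun E (u - s) * φ s := intervalIntegral.integral_of_le hu.1
    _ = ∫ s in Ioc t0 u, (∫ w, kfun E φ (s, w) ∂ν) :=
        setIntegral_congr_fun measurableSet_Ioc (fun s hs => claim1 s hs)
    _ = ∫ w, (∫ s, kfun E φ (s, w) ∂ν) ∂ν := hswap
    _ = ∫ w in Ioc t0 u, (∫ s in t0..w, E (w - s) * φ s) :=
        setIntegral_congr_fun measurableSet_Ioc (fun w hw => claim2 w hw)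
    _ = ∫ w in t0..u, (∫ s in t0..w, E (w - s) * φ s) :=
        (intervalIntegral.integral_of_le hu.1).symm

lemma gI_integrable (htT : t0 < T1) (hμ : 0 < μ) (hK : 0 ≤ K)
    (hEc : ContinuousOn E (Ioi 0))
    (hEb : ∀ z, 0 < z → z ≤ T1 - t0 → |E z| ≤ K * z ^ (μ - 1))
    {φ : ℝ → ℝ} (hφ : Continuous φ) :
    IntegrableOn (fun w => ∫ s in t0..w, E (w - s) * φ s) (Ioc t0 T1) volume := by
  set ν := volume.restrict (Ioc t0 T1) with hν
  have hk := kfun_integrable htT hμ hK hEc hEb hφ (u := T1) ⟨htT.le, le_rfl⟩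
  have h1 : Integrable (fun w => ∫ s, kfun E φ (s, w) ∂ν) ν := by
    exact hk.integral_prod_right
  apply h1.congr
  filter_upwards [ae_restrict_mem measurableSet_Ioc] with w hw
  rw [kfun_slice_s w, MeasureTheory.integral_indicator measurableSet_Iio, hν,
    Measure.restrict_restrict measurableSet_Iio]
  have hset : Iio w ∩ Ioc t0 T1 = Ioo t0 w := by
    ext x
    simp only [mem_inter_iff, mem_Iio, mem_Ioc, mem_Ioo]
    exact ⟨fun ⟨h1, h2, _⟩ => ⟨h2, h1⟩, fun ⟨h1, h2⟩ => ⟨h2, h1, (le_of_lt h2).trans hw.2⟩⟩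
  rw [hset, Measure.restrict_congr_set Ioo_ae_eq_Ioc,
    ← intervalIntegral.integral_of_le hw.1.le]

noncomputable def gTil (E φ : ℝ → ℝ) (t0 w : ℝ) : ℝ :=
  ∫ x, (Ioc 0 (w - t0)).indicator (fun x => E x * φ (w - x)) x

lemma g_eq_gTil {E φ : ℝ → ℝ} {t0 w : ℝ} (hw : t0 ≤ w) :
    (∫ s in t0..w, E (w - s) * φ s) = gTil E φ t0 w := by
  have h1 : ∀ s : ℝ, E (w - s) * φ s = (fun x => E x * φ (w - x)) (w - s) := by
    intro s; simp [sub_sub_cancel]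
  rw [gTil, MeasureTheory.integral_indicator measurableSet_Ioc,
    ← intervalIntegral.integral_of_le (by linarith : (0:ℝ) ≤ w - t0)]
  have h2 := intervalIntegral.integral_comp_sub_left
    (a := t0) (b := w) (fun x => E x * φ (w - x)) w
  simp only [sub_self] at h2
  rw [← h2]
  exact intervalIntegral.integral_congr (fun s _ => h1 s)

lemma gTil_contAt (htT : t0 < T1) (hμ : 0 < μ) (hK : 0 ≤ K)
    (hEc : ContinuousOn E (Ioi 0))
    (hEb : ∀ z, 0 < z → z ≤ T1 - t0 → |E z| ≤ K * z ^ (μ - 1))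
    {φ : ℝ → ℝ} (hφ : Continuous φ) {t : ℝ} (ht : t ∈ Ioo t0 T1) :
    ContinuousAt (gTil E φ t0) t := by
  obtain ⟨M, hM⟩ := (isCompact_Icc (a := t0) (b := T1)).exists_bound_of_continuousOn
    hφ.continuousOn
  have hM0 : 0 ≤ M := le_trans (norm_nonneg (φ t0)) (hM t0 ⟨le_rfl, htT.le⟩)
  apply MeasureTheory.continuousAt_of_dominated
    (bound := (Ioc 0 (T1 - t0)).indicator (fun x => K * x ^ (μ - 1) * M))
  · apply Filter.Eventually.of_forall
    intro w
    rw [aestronglyMeasurable_indicator_iff measurableSet_Ioc]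
    apply ContinuousOn.aestronglyMeasurable _ measurableSet_Ioc
    apply ContinuousOn.mul (hEc.mono Ioc_subset_Ioi_self)
    exact (hφ.comp (continuous_const.sub continuous_id)).continuousOn
  · filter_upwards [(isOpen_Ioo.mem_nhds ht : Ioo t0 T1 ∈ nhds t)] with w hw
    apply Filter.Eventually.of_forall
    intro x
    by_cases hx : x ∈ Ioc 0 (w - t0)
    · rw [Set.indicator_of_mem hx]
      have hx2 : x ∈ Ioc 0 (T1 - t0) := ⟨hx.1, hx.2.trans (by linarith [hw.2])⟩
      rw [Set.indicator_of_mem hx2, Real.norm_eq_abs, abs_mul]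
      have h1 : |E x| ≤ K * x ^ (μ - 1) := hEb x hx.1 hx2.2
      have h2 : |φ (w - x)| ≤ M := by
        have hmem : w - x ∈ Icc t0 T1 :=
          ⟨by linarith [hx.2], by linarith [hx.1, hw.2]⟩
        have := hM _ hmem
        rwa [Real.norm_eq_abs] at this
      calc |E x| * |φ (w - x)| ≤ (K * x ^ (μ - 1)) * M :=
            mul_le_mul h1 h2 (abs_nonneg _)
              (mul_nonneg hK (Real.rpow_nonneg hx.1.le _))
        _ = K * x ^ (μ - 1) * M := by ring
    · rw [Set.indicator_of_notMem hx, norm_zero]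
      apply Set.indicator_nonneg
      intro y hy
      have : (0:ℝ) < y := hy.1
      positivity
  · rw [integrable_indicator_iff measurableSet_Ioc]
    apply Integrable.mul_const
    apply Integrable.const_mul
    exact (intervalIntegral.intervalIntegrable_rpow'
      (by linarith : (-1:ℝ) < μ - 1)).1.mono_set
      (by intro x hx; exact hx)
  · have hae : ∀ᵐ (x : ℝ), x ≠ t - t0 := by
      rw [ae_iff, show {a : ℝ | ¬ a ≠ (t - t0)} = {t - t0} by ext a; simp]
      exact measure_singleton _
    filter_upwards [hae] with x hx
    rcases le_or_gt x 0 with hx0 | hx0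
    · have : (fun w => (Ioc 0 (w - t0)).indicator (fun x => E x * φ (w - x)) x)
          = fun _ => 0 := by
        funext w
        exact Set.indicator_of_notMem (fun hmem => absurd hmem.1 (not_lt.2 hx0)) _
      rw [this]; exact continuousAt_const
    rcases lt_or_gt_of_ne hx with hlt | hgt
    · -- 0 < x < t - t0 : eventually the indicator is active
      have hopen : IsOpen {w : ℝ | x < w - t0} := by
        have : {w : ℝ | x < w - t0} = Ioi (x + t0) := by ext w; simp [mem_Ioi]; constructor <;> intro <;> linarith
        rw [this]; exact isOpen_Ioi
      have hmem : t ∈ {w : ℝ | x < w - t0} := hlt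
      apply ContinuousAt.congr
        (f := fun w => E x * φ (w - x))
      · exact (continuous_const.mul (hφ.comp (continuous_id.sub continuous_const))).continuousAt
      · filter_upwards [hopen.mem_nhds hmem] with w hw
        exact (Set.indicator_of_mem (show x ∈ Ioc 0 (w - t0) from ⟨hx0, le_of_lt hw⟩) (fun x => E x * φ (w - x))).symm
    · -- x > t - t0 : eventually the indicator is 0
      have hopen : IsOpen {w : ℝ | w - t0 < x} := by
        have : {w : ℝ | w - t0 < x} = Iio (x + t0) := by ext w; simp [mem_Iio]; constructor <;> intro <;> linarith
        rw [this]; exact isOpen_Iio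
      apply ContinuousAt.congr (f := fun _ : ℝ => (0:ℝ)) continuousAt_const
      filter_upwards [hopen.mem_nhds hgt] with w hw
      exact (Set.indicator_of_notMem (show x ∉ Ioc 0 (w - t0) from fun hmem => absurd hmem.2 (not_le.2 hw)) (fun x => E x * φ (w - x))).symm

lemma main_deriv (htT : t0 < T1) (hμ : 0 < μ) (hK : 0 ≤ K)
    (hEc : ContinuousOn E (Ioi 0))
    (hEb : ∀ z, 0 < z → z ≤ T1 - t0 → |E z| ≤ K * z ^ (μ - 1))
    {f : ℝ → ℝ} (hf : ContDiff ℝ 1 f) {t : ℝ} (ht : t ∈ Ioo t0 T1) :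
    deriv (fun u => ∫ s in t0..u, E (u - s) * f s) t
      = f t0 * E (t - t0) + ∫ s in t0..t, E (t - s) * deriv f s := by
  set φ := deriv f with hφdef
  have hφ : Continuous φ := hf.continuous_deriv le_rfl
  set gI : ℝ → ℝ := fun w => ∫ s in t0..w, E (w - s) * φ s with hgI
  -- the decomposition
  have hdecomp : ∀ u ∈ Icc t0 T1, (∫ s in t0..u, E (u - s) * f s)
      = f t0 * Hfun E (u - t0) + ∫ w in t0..u, gI w := by
    intro u hu
    rw [IBP htT hμ hK hEc hEb hf u hu, fubini_step htT hμ hK hEc hEb hφ hu]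
  have hEq : (fun u => ∫ s in t0..u, E (u - s) * f s)
      =ᶠ[nhds t] (fun u => f t0 * Hfun E (u - t0) + ∫ w in t0..u, gI w) := by
    filter_upwards [isOpen_Ioo.mem_nhds ht] with u hu
    exact hdecomp u ⟨hu.1.le, hu.2.le⟩
  rw [hEq.deriv_eq]
  -- derivative of the first part
  have hd1 : HasDerivAt (fun u => f t0 * Hfun E (u - t0)) (f t0 * E (t - t0)) t := by
    have h1 : HasDerivAt (fun u : ℝ => u - t0) 1 t := (hasDerivAt_id t).sub_const t0
    have h2 : HasDerivAt (Hfun E) (E (t - t0)) (t - t0) :=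
      Hderiv htT hμ hK hEc hEb (t - t0) (by linarith [ht.1]) (by linarith [ht.2])
    have h3 := (h2.comp t h1).const_mul (f t0)
    simpa [Function.comp] using h3
  -- derivative of the second part
  have hInt : IntervalIntegrable gI volume t0 t := by
    rw [intervalIntegrable_iff_integrableOn_Ioc_of_le ht.1.le]
    exact (gI_integrable htT hμ hK hEc hEb hφ).mono_set
      (Ioc_subset_Ioc le_rfl ht.2.le)
  have hgg : ∀ w ∈ Ioo t0 T1, gI w = gTil E φ t0 w := fun w hw => g_eq_gTil hw.1.le
  have hmeas : StronglyMeasurableAtFilter gI (nhds t) := by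
    refine ⟨Ioo t0 T1, isOpen_Ioo.mem_nhds ht, ?_⟩
    have h1 : ContinuousOn (gTil E φ t0) (Ioo t0 T1) := fun w hw =>
      (gTil_contAt htT hμ hK hEc hEb hφ hw).continuousWithinAt
    have h2 := h1.aestronglyMeasurable (μ := volume) measurableSet_Ioo
    apply h2.congr
    rw [Filter.EventuallyEq, ae_restrict_iff' measurableSet_Ioo]
    exact Filter.Eventually.of_forall (fun w hw => (hgg w hw).symm)
  have hcont : ContinuousAt gI t := by
    rw [continuousAt_congr (g := gTil E φ t0) ?_]
    · exact gTil_contAt htT hμ hK hEc hEb hφ ht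
    · filter_upwards [isOpen_Ioo.mem_nhds ht] with w hw
      exact hgg w hw
  have hd2 : HasDerivAt (fun u => ∫ w in t0..u, gI w) (gI t) t :=
    intervalIntegral.integral_hasDerivAt_right hInt hmeas hcont
  exact (hd1.add hd2).deriv

end Integration

/-- Relation between the generalized ABC and ABR derivatives. -/
theorem abc_deriv_eq_abr_deriv_sub
    (t0 T θ μ γ b : ℝ) (htT : t0 < T) (hθ0 : 0 < θ) (hθ1 : θ < 1)
    (hμ : 0 < μ) (hb : 0 < b)
    (f : ℝ → ℝ) (hf : ContDiff ℝ 1 f) :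
    ∀ t ∈ Set.Ioc t0 T,
      ABCDeriv t0 b θ μ γ f t =
        ABRDeriv t0 b θ μ γ f t -
          (b / (1 - θ)) * f t0 * mittagLeffler θ μ γ (-θ / (1 - θ)) (t - t0) := by
  intro t ht
  have htT1 : t0 < T + 1 := by linarith
  obtain ⟨K, hK0, hEb⟩ := ml_bound hθ0 hθ1 hμ γ (-θ / (1 - θ)) (T + 1 - t0) (by linarith)
  have hEc := ml_contOn hθ0 hθ1 hμ γ (-θ / (1 - θ))
  have ht' : t ∈ Ioo t0 (T + 1) := ⟨ht.1, by linarith [ht.2]⟩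
  have hder := main_deriv (E := mittagLeffler θ μ γ (-θ / (1 - θ)))
    htT1 hμ hK0 hEc hEb hf ht'
  simp only [ABCDeriv, ABRDeriv]
  rw [hder]
  ring
end
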